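/- arXiv:0907.5467 — 8 statements merged into one kernel-verified Lean document; each statement's English description precedes it below -/
import Mathlib

section
/- (Positivity of the truncated eigenvalue.) Let κ be a fragmentation kernel satisfying (K1), let β ∈ L¹_loc(0,∞) ∩ P be nonnegative, let τ ∈ P be nonnegative with x^{α₀}τ(x) locally bounded on [0,∞) for some α₀ ≥ 0 and with τ ≥ m_K > 0 a.e. on every compact K ⊂ (0,∞), and assume xβ(x)/τ(x) → ∞ as x → ∞. Fix η > 0 and define τ_η := η on [0,η] and τ_η := τ on (η,∞), and for R > 0 set μ(R) := ess inf_{[0,R]} τ_η > 0. Then there exists R₀ > 0 such that for every R > R₀ the following holds: if δ = μ(R)/(2R) and (λ,U) solves the truncated eigenproblem on (0,R) with growth rate τ_η and inflow δ in integrated form, with U ≥ 0 and ∫₀ᴿ U = 1, then λ > 0. -/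
open MeasureTheory Set Filter
open scoped ENNReal NNReal

noncomputable section

/-- The kernel `κ(·,y)` is supported in `[0,y]`. -/
def KernelSupport (κ : ℝ → Measure ℝ) : Prop :=
  ∀ y : ℝ, 0 < y → κ y (Set.Icc 0 y)ᶜ = 0

/-- Measurability of `y ↦ ∫ ψ dκ(·,y)` for continuous `ψ`. -/
def KernelMeasurable (κ : ℝ → Measure ℝ) : Prop :=
  ∀ ψ : ℝ → ℝ, Continuous ψ → Measurable fun y => ∫ x, ψ x ∂(κ y)

/-- (K1): `κ(·,y)` is a probability measure. -/
def K1 (κ : ℝ → Measure ℝ) : Prop := ∀ y : ℝ, 0 < y → IsProbabilityMeasure (κ y)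

/-- (K2): `∫ x dκ(x,y) = y/2`. -/
def K2 (κ : ℝ → Measure ℝ) : Prop := ∀ y : ℝ, 0 < y → ∫ x, x ∂(κ y) = y / 2

/-- The class `P` of nonnegative measurable functions with polynomial upper and
lower control at infinity. -/
def MemP (f : ℝ → ℝ) : Prop :=
  Measurable f ∧ (∀ x : ℝ, 0 < x → 0 ≤ f x) ∧
  (∃ μ : ℝ, 0 ≤ μ ∧ ∃ M : ℝ, ∀ᶠ x in atTop, x ^ (-μ) * f x ≤ M) ∧
  (∃ ν : ℝ, 0 ≤ ν ∧ ∃ ε : ℝ, 0 < ε ∧ ∀ᶠ x in atTop, ε ≤ x ^ ν * f x)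

/-- `(lam, U)` solves the truncated eigenproblem, in integrated form with inflow
`δ`, on the interval `S` (`S = (0,R)`, or `S = (0,∞)` for `R = ∞`):
for a.e. `x ∈ S`,
`τ(x)U(x) + λ∫₀ˣU + ∫₀ˣβU = δ + 2∫_S β(y)U(y) κ([0,x],y) dy`. -/
def TruncEigen (τ β : ℝ → ℝ) (κ : ℝ → Measure ℝ) (δ : ℝ) (S : Set ℝ)
    (lam : ℝ) (U : ℝ → ℝ) : Prop :=
  IntegrableOn U S ∧ IntegrableOn (fun y => β y * U y) S ∧
  ∀ᵐ x ∂(volume.restrict S),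
    τ x * U x + lam * (∫ y in Set.Ioo 0 x, U y) + (∫ y in Set.Ioo 0 x, β y * U y)
      = δ + 2 * ∫ y in S, β y * U y * ((κ y) (Set.Icc 0 x)).toReal

open Topology in
/-- The function `y ↦ κ(y)([0,x])` is a.e.-measurable on `(0,R)`. -/
lemma kernel_apply_aemeasurable (κ : ℝ → Measure ℝ)
    (hκfin : ∀ y : ℝ, 0 < y → IsFiniteMeasure (κ y))
    (hκmeas : KernelMeasurable κ) (x R : ℝ) (hx : 0 ≤ x) :
    AEMeasurable (fun y => ((κ y) (Set.Icc 0 x)).toReal) (volume.restrict (Ioo 0 R)) := by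
  set ψ : ℕ → ℝ → ℝ := fun n t => max 0 (1 - n * Metric.infDist t (Icc 0 x)) with hψ
  have hψc : ∀ n, Continuous (ψ n) := fun n =>
    continuous_const.max (continuous_const.sub
      (continuous_const.mul (Metric.continuous_infDist_pt _)))
  have hψ01 : ∀ n t, 0 ≤ ψ n t ∧ ψ n t ≤ 1 := by
    intro n t
    refine ⟨le_max_left _ _, max_le (by norm_num) ?_⟩
    have : 0 ≤ (n : ℝ) * Metric.infDist t (Icc 0 x) :=
      mul_nonneg (Nat.cast_nonneg n) Metric.infDist_nonneg
    linarith
  have hpt : ∀ t, Tendsto (fun n => ψ n t) atTop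
      (𝓝 ((Icc (0:ℝ) x).indicator (fun _ => (1:ℝ)) t)) := by
    intro t
    by_cases ht : t ∈ Icc (0:ℝ) x
    · rw [indicator_of_mem ht]
      have h1 : ∀ n, ψ n t = 1 := by
        intro n; simp [hψ, Metric.infDist_zero_of_mem ht]
      simp only [h1]; exact tendsto_const_nhds
    · rw [indicator_of_notMem ht]
      have hd : 0 < Metric.infDist t (Icc 0 x) :=
        (isClosed_Icc.notMem_iff_infDist_pos (nonempty_Icc.2 hx)).1 ht
      have hev : ∀ᶠ n : ℕ in atTop, ψ n t = 0 := by
        filter_upwards [eventually_ge_atTop ⌈1/Metric.infDist t (Icc 0 x)⌉₊] with n hn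
        have h1 : 1 / Metric.infDist t (Icc 0 x) ≤ (n : ℝ) := Nat.ceil_le.mp hn
        have h2 : 1 ≤ (n : ℝ) * Metric.infDist t (Icc 0 x) := by
          rw [div_le_iff₀ hd] at h1; linarith
        exact max_eq_left (by linarith)
      exact tendsto_const_nhds.congr' (hev.mono fun n h => h.symm)
  apply aemeasurable_of_tendsto_metrizable_ae atTop
    (fun n => (hκmeas _ (hψc n)).aemeasurable)
  filter_upwards [ae_restrict_mem measurableSet_Ioo] with y hy
  haveI := hκfin y hy.1
  have h := tendsto_integral_of_dominated_convergence (μ := κ y)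
    (F := fun n t => ψ n t) (fun _ => (1:ℝ))
    (fun n => (hψc n).aestronglyMeasurable) (integrable_const 1)
    (fun n => ae_of_all _ fun t => by
      rw [Real.norm_eq_abs, abs_of_nonneg (hψ01 n t).1]; exact (hψ01 n t).2)
    (ae_of_all _ hpt)
  rwa [integral_indicator_const (1:ℝ) measurableSet_Icc, smul_eq_mul, mul_one] at h

/-- An integral form of Gronwall's inequality, with rate `(n+1)/t`. -/
lemma gronwall_pow (g : ℝ → ℝ) (a b K : ℝ) (n : ℕ) (ha : 0 < a) (hK : 0 < K)
    (hg : ContinuousOn g (Icc a b))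
    (hineq : ∀ x ∈ Icc a b, K + (∫ t in a..x, ((n : ℝ) + 1) / t * g t) ≤ g x) :
    ∀ x ∈ Icc a b, K * (x / a) ^ (n + 1) ≤ g x := by
  have hθver : ∀ θ : ℝ, 0 < θ → θ < 1 → ∀ x ∈ Icc a b, θ * (K * (x / a) ^ (n + 1)) ≤ g x := by
    intro θ hθ0 hθ1
    by_contra hcon
    push_neg at hcon
    obtain ⟨x₀, hx₀, hx₀lt⟩ := hcon
    set φ : ℝ → ℝ := fun x => θ * (K * (x / a) ^ (n + 1)) with hφ
    have hφcont : Continuous φ := by fun_prop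
    set S : Set ℝ := Icc a b ∩ {x | g x - φ x ≤ 0} with hS
    have hSne : S.Nonempty := ⟨x₀, hx₀, by simp only [mem_setOf_eq]; simp only [hφ]; linarith⟩
    have hSclosed : IsClosed S :=
      ContinuousOn.preimage_isClosed_of_isClosed
        (hg.sub hφcont.continuousOn) isClosed_Icc isClosed_Iic
    have hSbdd : BddBelow S := ⟨a, fun y hy => hy.1.1⟩
    set s := sInf S with hs
    have hsS : s ∈ S := hSclosed.csInf_mem hSne hSbdd
    have hsab : s ∈ Icc a b := hsS.1
    have hab : a ≤ b := hsab.1.trans hsab.2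
    have hga : K ≤ g a := by
      have h := hineq a ⟨le_refl a, hab⟩
      rwa [intervalIntegral.integral_same, add_zero] at h
    have haS : a ∉ S := by
      intro haS
      have hφa : φ a = θ * K := by
        simp only [hφ]; rw [div_self ha.ne']; ring
      have : g a - φ a ≤ 0 := haS.2
      nlinarith
    have has : a < s := by
      rcases lt_or_eq_of_le (le_csInf hSne fun y hy => hy.1.1) with h | h
      · exact h
      · exact absurd (h ▸ hsS) haS
    have hIoo : ∀ t ∈ Ioo a s, φ t ≤ g t := by
      intro t ht
      have htS : t ∉ S := notMem_of_lt_csInf ht.2 hSbdd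
      have htab : t ∈ Icc a b := ⟨ht.1.le, ht.2.le.trans hsab.2⟩
      by_contra hc
      exact htS ⟨htab, by simp only [mem_setOf_eq]; push_neg at hc; linarith⟩
    have h2 : ∀ᵐ t ∂(volume.restrict (Icc a s)), t ∈ Ioo a s := by
      rw [ae_iff]
      rw [Measure.restrict_apply₀]
      · refine measure_mono_null (fun t ht => ?_)
          (measure_union_null Real.volume_singleton Real.volume_singleton :
            volume (({a} : Set ℝ) ∪ {s}) = 0)
        obtain ⟨htn, ht1, ht2⟩ := ht
        simp only [mem_setOf_eq, mem_Ioo, not_and_or, not_lt] at htn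
        rcases htn with h | h
        · exact Or.inl (le_antisymm ht1 h).symm
        · exact Or.inr (le_antisymm ht2 h)
      · exact (measurableSet_Ioo.compl).nullMeasurableSet
    have htpos' : ∀ t ∈ uIcc a s, (0:ℝ) < t := by
      intro t ht; rw [uIcc_of_le has.le] at ht; exact lt_of_lt_of_le ha ht.1
    have hint_g : IntervalIntegrable (fun t => ((n : ℝ) + 1) / t * g t) volume a s := by
      apply ContinuousOn.intervalIntegrable
      apply ContinuousOn.mul
      · exact continuousOn_const.div continuousOn_id fun t ht => (htpos' t ht).ne'
      · apply hg.mono; rw [uIcc_of_le has.le]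
        exact Icc_subset_Icc le_rfl hsab.2
    have hint_φ : IntervalIntegrable (fun t => ((n : ℝ) + 1) / t * φ t) volume a s := by
      apply ContinuousOn.intervalIntegrable
      apply ContinuousOn.mul
      · exact continuousOn_const.div continuousOn_id fun t ht => (htpos' t ht).ne'
      · exact hφcont.continuousOn
    have hmono : (∫ t in a..s, ((n : ℝ) + 1) / t * φ t)
        ≤ ∫ t in a..s, ((n : ℝ) + 1) / t * g t := by
      apply intervalIntegral.integral_mono_ae_restrict has.le hint_φ hint_g
      filter_upwards [h2] with t ht
      have htpos : 0 < t := ha.trans ht.1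
      exact mul_le_mul_of_nonneg_left (hIoo t ht) (by positivity)
    have hcalc : (∫ t in a..s, ((n : ℝ) + 1) / t * φ t)
        = θ * K * ((s / a) ^ (n + 1) - 1) := by
      have h1 : ∀ t ∈ uIcc a s, ((n : ℝ) + 1) / t * φ t
          = θ * K / a ^ (n + 1) * (((n : ℝ) + 1) * t ^ n) := by
        intro t ht
        have htpos : 0 < t := htpos' t ht
        simp only [hφ]
        rw [div_pow]
        field_simp
        ring
      rw [intervalIntegral.integral_congr h1, intervalIntegral.integral_const_mul,
        intervalIntegral.integral_const_mul, integral_pow]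
      have han : (0:ℝ) < a ^ (n + 1) := pow_pos ha _
      have hn1 : ((n : ℝ) + 1) ≠ 0 := by positivity
      rw [div_pow]
      field_simp
    have hgs := hineq s hsab
    have hφs : φ s = θ * K * (s / a) ^ (n + 1) := by simp only [hφ]; ring
    have hsS2 : g s - φ s ≤ 0 := hsS.2
    nlinarith [hK, hθ1]
  intro x hx
  by_contra hlt
  push_neg at hlt
  set A := K * (x / a) ^ (n + 1) with hA
  have hxa : 0 < x / a := div_pos (lt_of_lt_of_le ha hx.1) ha
  have hApos : 0 < A := by positivity
  obtain ⟨θ, hθ1, hθ2⟩ := exists_between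
    (show max (g x / A) (1/2) < 1 from max_lt ((div_lt_one hApos).2 hlt) (by norm_num))
  have hθ0 : 0 < θ := lt_of_lt_of_le (by norm_num) ((le_max_right _ _).trans hθ1.le)
  have h3 : g x / A < θ := lt_of_le_of_lt (le_max_left _ _) hθ1
  have h4 : g x < θ * A := by
    rw [div_lt_iff₀ hApos] at h3; linarith
  rw [hA] at h4
  linarith [hθver θ hθ0 hθ2 x hx]

set_option maxHeartbeats 1000000 in
/-- **Lemma 2 (Positivity of the truncated eigenvalue).** With `τ_η = max(τ,·)`
regularised near `0` by the constant `η`, and `μ(R)` the essential infimum of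
`τ_η` on `[0,R]`, there is `R₀ > 0` such that for `R > R₀` and inflow
`δ = μ(R)/(2R)`, any normalised nonnegative solution of the truncated
eigenproblem on `(0,R)` has a positive eigenvalue. -/
theorem truncated_eigenvalue_positive
    (κ : ℝ → Measure ℝ) (τ β : ℝ → ℝ)
    (hκfin : ∀ y : ℝ, 0 < y → IsFiniteMeasure (κ y))
    (hκsupp : KernelSupport κ) (hκmeas : KernelMeasurable κ) (hK1 : K1 κ)
    (hβP : MemP β) (hβloc : ∀ a b : ℝ, 0 < a → IntegrableOn β (Set.Icc a b))
    (α₀ : ℝ) (hα₀ : 0 ≤ α₀) (hτP : MemP τ)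
    (hτloc : ∀ A : ℝ, 0 < A → ∃ M : ℝ, ∀ x ∈ Set.Icc (0:ℝ) A, x ^ α₀ * τ x ≤ M)
    (hτpos : ∀ a b : ℝ, 0 < a →
      ∃ m : ℝ, 0 < m ∧ ∀ᵐ x ∂(volume : Measure ℝ), x ∈ Set.Icc a b → m ≤ τ x)
    (hβτinf : Tendsto (fun x => x * β x / τ x) atTop atTop)
    (η : ℝ) (hη : 0 < η)
    (τη : ℝ → ℝ) (hτη : ∀ x : ℝ, τη x = if x ≤ η then η else τ x) :
    ∃ R₀ : ℝ, 0 < R₀ ∧ ∀ R : ℝ, R₀ < R → ∀ δ lam : ℝ, ∀ U : ℝ → ℝ,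
      δ = essInf τη (volume.restrict (Set.Icc (0:ℝ) R)) / (2 * R) →
      TruncEigen τη β κ δ (Set.Ioo 0 R) lam U →
      (∀ᵐ x ∂(volume.restrict (Set.Ioo (0:ℝ) R)), 0 ≤ U x) →
      (∫ x in Set.Ioo (0:ℝ) R, U x = 1) →
      0 < lam := by
  obtain ⟨hτmeas, hτ0, ⟨μ₁, hμ₁, M₀, hM₀ev⟩, ⟨ν₁, hν₁, ε₁, hε₁, hτlowev⟩⟩ := hτP
  obtain ⟨hβmeas, hβ0, -, ⟨ν₂, hν₂, ε₂, hε₂, hβlowev⟩⟩ := hβP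
  set M₁ : ℝ := max M₀ 1 with hM₁def
  have hM₁ : (0:ℝ) < M₁ := lt_of_lt_of_le one_pos (le_max_right _ _)
  obtain ⟨X₁, hX₁⟩ := eventually_atTop.1 hM₀ev
  obtain ⟨X₂, hX₂⟩ := eventually_atTop.1 hτlowev
  obtain ⟨X₃, hX₃⟩ := eventually_atTop.1 hβlowev
  set n : ℕ := ⌈μ₁ + ν₁⌉₊ with hn
  have hnge : μ₁ + ν₁ ≤ (n : ℝ) := Nat.le_ceil _
  obtain ⟨X₄, hX₄⟩ := eventually_atTop.1 (hβτinf.eventually_ge_atTop ((n : ℝ) + 1))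
  set a₁ : ℝ := max (max (max X₁ X₂) (max X₃ X₄)) (max (η + 1) 1) with ha₁def
  have ha₁1 : (1:ℝ) ≤ a₁ := le_trans (le_max_right _ _) (le_max_right _ _)
  have ha₁η : η < a₁ :=
    lt_of_lt_of_le (by linarith) ((le_max_left _ _).trans (le_max_right _ _))
  have ha₁X₁ : X₁ ≤ a₁ := ((le_max_left _ _).trans (le_max_left _ _)).trans (le_max_left _ _)
  have ha₁X₂ : X₂ ≤ a₁ := ((le_max_right _ _).trans (le_max_left _ _)).trans (le_max_left _ _)
  have ha₁X₃ : X₃ ≤ a₁ := ((le_max_left _ _).trans (le_max_right _ _)).trans (le_max_left _ _)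
  have ha₁X₄ : X₄ ≤ a₁ := ((le_max_right _ _).trans (le_max_right _ _)).trans (le_max_left _ _)
  have ha₁pos : (0:ℝ) < a₁ := by linarith
  set x₁ : ℝ := a₁ + 1 with hx₁def
  have hx₁pos : (0:ℝ) < x₁ := by linarith
  have hx₁2 : (2:ℝ) ≤ x₁ := by linarith
  -- pointwise upper/lower bounds
  have hτub : ∀ x : ℝ, a₁ ≤ x → τ x ≤ M₁ * x ^ μ₁ := by
    intro x hx
    have hxpos : (0:ℝ) < x := lt_of_lt_of_le ha₁pos hx
    have h := hX₁ x (ha₁X₁.trans hx)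
    rw [Real.rpow_neg hxpos.le] at h
    have hxμ : (0:ℝ) < x ^ μ₁ := Real.rpow_pos_of_pos hxpos _
    have h2 : τ x ≤ M₀ * x ^ μ₁ := by
      have h3 : x ^ μ₁ * ((x ^ μ₁)⁻¹ * τ x) ≤ x ^ μ₁ * M₀ :=
        mul_le_mul_of_nonneg_left h hxμ.le
      have h4 : x ^ μ₁ * ((x ^ μ₁)⁻¹ * τ x) = τ x := by field_simp
      linarith [h3, h4.symm.le]
    exact h2.trans (mul_le_mul_of_nonneg_right (le_max_left _ _) hxμ.le)
  have hτlb : ∀ x : ℝ, X₂ ≤ x → 0 < x → ε₁ * x ^ (-ν₁) ≤ τ x := by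
    intro x hx hxpos
    have h := hX₂ x hx
    have hxν : (0:ℝ) < x ^ ν₁ := Real.rpow_pos_of_pos hxpos _
    rw [Real.rpow_neg hxpos.le]
    calc ε₁ * (x ^ ν₁)⁻¹ ≤ (x ^ ν₁ * τ x) * (x ^ ν₁)⁻¹ :=
          mul_le_mul_of_nonneg_right h (inv_nonneg.2 hxν.le)
      _ = τ x := by field_simp
  have hβlb : ∀ x : ℝ, a₁ ≤ x → ε₂ * x ^ (-ν₂) ≤ β x := by
    intro x hx
    have hxpos : (0:ℝ) < x := lt_of_lt_of_le ha₁pos hx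
    have h := hX₃ x (ha₁X₃.trans hx)
    have hxν : (0:ℝ) < x ^ ν₂ := Real.rpow_pos_of_pos hxpos _
    rw [Real.rpow_neg hxpos.le]
    calc ε₂ * (x ^ ν₂)⁻¹ ≤ (x ^ ν₂ * β x) * (x ^ ν₂)⁻¹ :=
          mul_le_mul_of_nonneg_right h (inv_nonneg.2 hxν.le)
      _ = β x := by field_simp
  have hβτ : ∀ x : ℝ, a₁ ≤ x → 0 < τ x ∧ ((n : ℝ) + 1) * τ x / x ≤ β x := by
    intro x hx
    have hxpos : (0:ℝ) < x := lt_of_lt_of_le ha₁pos hx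
    have h := hX₄ x (ha₁X₄.trans hx)
    have hτne : τ x ≠ 0 := by
      intro h0
      rw [h0, div_zero] at h
      have : (0:ℝ) < (n : ℝ) + 1 := by positivity
      linarith
    have hτxpos : 0 < τ x := lt_of_le_of_ne (hτ0 x hxpos) (Ne.symm hτne)
    refine ⟨hτxpos, ?_⟩
    rw [le_div_iff₀ hτxpos] at h
    rw [div_le_iff₀ hxpos]
    nlinarith
  have hrpow_anti : ∀ u v e : ℝ, 0 < u → u ≤ v → 0 ≤ e → v ^ (-e) ≤ u ^ (-e) := by
    intro u v e hu huv he
    rw [Real.rpow_neg hu.le, Real.rpow_neg (hu.trans_le huv).le]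
    exact inv_anti₀ (Real.rpow_pos_of_pos hu e) (Real.rpow_le_rpow hu.le huv he)
  -- constants
  set X₅ : ℝ := max X₂ (η + 1) with hX₅def
  obtain ⟨m, hm, hmae⟩ := hτpos η X₅ hη
  set c₀ : ℝ := ε₂ * x₁ ^ (-ν₂) / (M₁ * x₁ ^ μ₁) with hc₀def
  have hc₀ : 0 < c₀ :=
    div_pos (mul_pos hε₂ (Real.rpow_pos_of_pos hx₁pos _))
      (mul_pos hM₁ (Real.rpow_pos_of_pos hx₁pos _))
  set c₂ : ℝ := min η (min m ε₁) with hc₂def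
  have hc₂ : 0 < c₂ := lt_min hη (lt_min hm hε₁)
  set c₅ : ℝ := c₂ * c₀ / (4 * M₁ * (2 * x₁) ^ (n + 1)) with hc₅def
  have hc₅ : 0 < c₅ := by
    apply div_pos (mul_pos hc₂ hc₀)
    positivity
  refine ⟨max (2 * x₁ + 1) (1 / c₅ + 1), by positivity, ?_⟩
  intro R hR δ lam U hδ hTE hU hnorm
  by_contra hlam
  push_neg at hlam
  have hR2x : 2 * x₁ < R := by
    have := (le_max_left (2 * x₁ + 1) (1 / c₅ + 1)).trans_lt hR
    linarith
  have hRc : 1 / c₅ < R := by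
    have := (le_max_right (2 * x₁ + 1) (1 / c₅ + 1)).trans_lt hR
    linarith
  have hR1 : (1:ℝ) ≤ R := by linarith
  have hRpos : (0:ℝ) < R := by linarith
  have hx₁R2 : x₁ < R / 2 := by linarith
  have hx₁leR : x₁ ≤ R := by linarith
  -- lower bound for the essential infimum and δ
  have hmuR : c₂ * R ^ (-ν₁) ≤ essInf τη (volume.restrict (Icc (0:ℝ) R)) := by
    haveI : NeBot (ae (volume.restrict (Icc (0:ℝ) R))) := by
      rw [ae_neBot]
      intro h0
      have h1 : (volume.restrict (Icc (0:ℝ) R)) (Icc (0:ℝ) R) = 0 := by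
        rw [h0]; rfl
      rw [Measure.restrict_apply_self, Real.volume_Icc] at h1
      rw [ENNReal.ofReal_eq_zero] at h1
      linarith
    obtain ⟨M₂, hM₂⟩ := hτloc R hRpos
    have hbd : ∀ᵐ t ∂(volume.restrict (Icc (0:ℝ) R)), τη t ≤ max η (M₂ / η ^ α₀) := by
      filter_upwards [ae_restrict_mem measurableSet_Icc] with t ht
      rw [hτη t]
      by_cases htη : t ≤ η
      · rw [if_pos htη]; exact le_max_left _ _
      · rw [if_neg htη]
        push_neg at htη
        have htpos : 0 < t := hη.trans htη
        have h := hM₂ t ⟨htpos.le, ht.2⟩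
        have hηα : (0:ℝ) < η ^ α₀ := Real.rpow_pos_of_pos hη _
        have htα : η ^ α₀ ≤ t ^ α₀ := Real.rpow_le_rpow hη.le htη.le hα₀
        have hτt : 0 ≤ τ t := hτ0 t htpos
        refine le_trans ?_ (le_max_right _ _)
        rw [le_div_iff₀ hηα]
        linarith [mul_le_mul_of_nonneg_left htα hτt]
    have hcobdd : IsCoboundedUnder (· ≥ ·) (ae (volume.restrict (Icc (0:ℝ) R))) τη :=
      isCoboundedUnder_ge_of_eventually_le _ hbd
    have hev : ∀ᵐ t ∂(volume.restrict (Icc (0:ℝ) R)), c₂ * R ^ (-ν₁) ≤ τη t := by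
      filter_upwards [ae_restrict_mem measurableSet_Icc, ae_restrict_of_ae hmae] with t ht hmt
      have hRν : R ^ (-ν₁) ≤ 1 := Real.rpow_le_one_of_one_le_of_nonpos hR1 (by linarith)
      have hRνpos : 0 < R ^ (-ν₁) := Real.rpow_pos_of_pos hRpos _
      have hc₂R : c₂ * R ^ (-ν₁) ≤ c₂ := by
        have := mul_le_mul_of_nonneg_left hRν hc₂.le
        linarith
      rw [hτη t]
      by_cases htη : t ≤ η
      · rw [if_pos htη]; exact hc₂R.trans (min_le_left _ _)
      · rw [if_neg htη]
        push_neg at htη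
        have htpos : 0 < t := hη.trans htη
        by_cases htX : t ≤ X₅
        · have h := hmt ⟨htη.le, htX⟩
          have : c₂ ≤ m := (min_le_right _ _).trans (min_le_left _ _)
          linarith
        · push_neg at htX
          have htX₂ : X₂ ≤ t := ((le_max_left _ _).trans htX.le)
          have h1 : c₂ ≤ ε₁ := (min_le_right _ _).trans (min_le_right _ _)
          have h2 : R ^ (-ν₁) ≤ t ^ (-ν₁) := hrpow_anti t R ν₁ htpos ht.2 hν₁
          calc c₂ * R ^ (-ν₁) ≤ ε₁ * t ^ (-ν₁) :=
                mul_le_mul h1 h2 (Real.rpow_pos_of_pos hRpos _).le hε₁.le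
            _ ≤ τ t := hτlb t htX₂ htpos
    exact le_liminf_of_le hcobdd hev
  have hδlb : c₂ * R ^ (-ν₁) / (2 * R) ≤ δ := by
    rw [hδ]
    exact (div_le_div_iff_of_pos_right (by linarith)).2 hmuR
  have hδpos : 0 < δ :=
    lt_of_lt_of_le (by positivity) hδlb
  -- unpack the eigenproblem
  obtain ⟨hUint, hβUint, heq⟩ := hTE
  have hβU0 : ∀ᵐ y ∂(volume : Measure ℝ), y ∈ Ioo (0:ℝ) R → 0 ≤ β y * U y := by
    filter_upwards [(ae_restrict_iff' measurableSet_Ioo).1 hU] with y hy hmem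
    exact mul_nonneg (hβ0 y hmem.1) (hy hmem)
  set f : ℝ → ℝ := (Ioo (0:ℝ) R).indicator (fun y => β y * U y) with hfdef
  have hfint : Integrable f volume := hβUint.integrable_indicator measurableSet_Ioo
  have hf0 : 0 ≤ᵐ[volume] f := by
    filter_upwards [hβU0] with y hy
    simp only [Pi.zero_apply, hfdef]
    by_cases hmem : y ∈ Ioo (0:ℝ) R
    · rw [indicator_of_mem hmem]; exact hy hmem
    · rw [indicator_of_notMem hmem]
  set G : ℝ → ℝ := fun x => ∫ t in (0:ℝ)..x, f t with hGdef
  have hGcont : Continuous G := hfint.continuous_primitive 0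
  have hGrepr : ∀ x : ℝ, 0 ≤ x → x ≤ R → G x = ∫ y in Ioo (0:ℝ) x, β y * U y := by
    intro x hx0 hxR
    show (∫ t in (0:ℝ)..x, f t) = _
    rw [intervalIntegral.integral_of_le hx0, integral_Ioc_eq_integral_Ioo, hfdef,
      integral_indicator measurableSet_Ioo, Measure.restrict_restrict measurableSet_Ioo,
      Ioo_inter_Ioo]
    simp [min_eq_right hxR]
  have hG0 : ∀ x : ℝ, 0 ≤ x → 0 ≤ G x := by
    intro x hx
    exact intervalIntegral.integral_nonneg_of_ae hx hf0
  -- the kernel integral dominates G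
  have hI : ∀ x ∈ Ioo (0:ℝ) R,
      G x ≤ ∫ y in Ioo (0:ℝ) R, β y * U y * ((κ y) (Icc 0 x)).toReal := by
    intro x hx
    have hker := kernel_apply_aemeasurable κ hκfin hκmeas x R hx.1.le
    have hmeas2 : AEStronglyMeasurable (fun y => β y * U y * ((κ y) (Icc 0 x)).toReal)
        (volume.restrict (Ioo (0:ℝ) R)) :=
      (hβUint.aestronglyMeasurable.aemeasurable.mul hker).aestronglyMeasurable
    have hker01 : ∀ y, y ∈ Ioo (0:ℝ) R → ((κ y) (Icc 0 x)).toReal ≤ 1 := by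
      intro y hy
      haveI := hK1 y hy.1
      have h1 := ENNReal.toReal_mono ENNReal.one_ne_top (prob_le_one (μ := κ y) (s := Icc 0 x))
      simpa using h1
    have hint2 : Integrable (fun y => β y * U y * ((κ y) (Icc 0 x)).toReal)
        (volume.restrict (Ioo (0:ℝ) R)) := by
      apply Integrable.mono hβUint hmeas2
      filter_upwards [ae_restrict_mem measurableSet_Ioo] with y hy
      rw [Real.norm_eq_abs, Real.norm_eq_abs, abs_mul]
      have h1 : |((κ y) (Icc 0 x)).toReal| ≤ 1 := by
        rw [abs_of_nonneg ENNReal.toReal_nonneg]; exact hker01 y hy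
      exact mul_le_of_le_one_right (abs_nonneg _) h1
    have hindint : Integrable ((Ioo (0:ℝ) x).indicator (fun y => β y * U y))
        (volume.restrict (Ioo (0:ℝ) R)) :=
      ((hβUint.mono_set (Ioo_subset_Ioo le_rfl hx.2.le)).integrable_indicator
        measurableSet_Ioo).restrict
    have hle : (Ioo (0:ℝ) x).indicator (fun y => β y * U y)
        ≤ᵐ[volume.restrict (Ioo (0:ℝ) R)]
          fun y => β y * U y * ((κ y) (Icc 0 x)).toReal := by
      filter_upwards [ae_restrict_mem measurableSet_Ioo, hU] with y hy hUy
      by_cases hmem : y ∈ Ioo (0:ℝ) x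
      · rw [indicator_of_mem hmem]
        have h1 : (κ y) ((Icc 0 x)ᶜ) = 0 :=
          measure_mono_null (compl_subset_compl.2 (Icc_subset_Icc le_rfl hmem.2.le))
            (hκsupp y hmem.1)
        haveI := hK1 y hmem.1
        have h2 : (κ y) (Icc 0 x) = 1 := by
          have h3 := measure_add_measure_compl (μ := κ y)
            (measurableSet_Icc (a := (0:ℝ)) (b := x))
          rw [h1, add_zero, measure_univ] at h3
          exact h3
        rw [h2]
        simp
      · rw [indicator_of_notMem hmem]
        exact mul_nonneg (mul_nonneg (hβ0 y hy.1) hUy) ENNReal.toReal_nonneg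
    have heqind : (∫ y in Ioo (0:ℝ) R, (Ioo (0:ℝ) x).indicator (fun y => β y * U y) y)
        = G x := by
      rw [integral_indicator measurableSet_Ioo, Measure.restrict_restrict measurableSet_Ioo,
        hGrepr x hx.1.le hx.2.le, Ioo_inter_Ioo]
      simp [min_eq_left hx.2.le]
    calc G x = _ := heqind.symm
      _ ≤ _ := integral_mono_ae hindint hint2 hle
  -- the key pointwise inequality
  have hkey : ∀ᵐ x ∂(volume.restrict (Ioo (0:ℝ) R)), δ + G x ≤ τη x * U x := by
    filter_upwards [heq, ae_restrict_mem measurableSet_Ioo] with x hxeq hxmem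
    have hF : 0 ≤ ∫ y in Ioo (0:ℝ) x, U y :=
      integral_nonneg_of_ae
        (ae_restrict_of_ae_restrict_of_subset (Ioo_subset_Ioo le_rfl hxmem.2.le) hU)
    have hGx := hGrepr x hxmem.1.le hxmem.2.le
    have hIx := hI x hxmem
    rw [← hGx] at hxeq
    linarith [mul_nonneg (neg_nonneg.2 hlam) hF]
  have hkey' : ∀ᵐ x ∂(volume : Measure ℝ), x ∈ Ioo (0:ℝ) R →
      0 < τη x ∧ δ / τη x ≤ U x ∧ G x / τη x ≤ U x := by
    rw [← ae_restrict_iff' measurableSet_Ioo]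
    filter_upwards [hkey, hU, ae_restrict_mem measurableSet_Ioo] with x h1 h2 h3
    have hGx0 : 0 ≤ G x := hG0 x h3.1.le
    have hτηpos : 0 < τη x := by
      by_contra hc
      push_neg at hc
      linarith [mul_nonneg (neg_nonneg.2 hc) h2]
    refine ⟨hτηpos, ?_, ?_⟩
    · rw [div_le_iff₀ hτηpos]; linarith
    · rw [div_le_iff₀ hτηpos]; linarith
  -- initial lower bound for G at x₁
  have hτηeq : ∀ t : ℝ, a₁ ≤ t → τη t = τ t := by
    intro t ht
    rw [hτη t, if_neg (by push_neg; linarith : ¬ t ≤ η)]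
  have hGx₁ : δ * c₀ ≤ G x₁ := by
    have h1 : G x₁ = ∫ y in Ioo (0:ℝ) x₁, β y * U y := hGrepr x₁ (by linarith) hx₁leR
    have h2 : (∫ y in Ioo a₁ x₁, β y * U y) ≤ ∫ y in Ioo (0:ℝ) x₁, β y * U y := by
      apply setIntegral_mono_set (hβUint.mono_set (Ioo_subset_Ioo le_rfl hx₁leR))
      · filter_upwards [ae_restrict_of_ae hβU0, ae_restrict_mem measurableSet_Ioo] with y h hy
        exact h ⟨hy.1, lt_of_lt_of_le hy.2 hx₁leR⟩
      · exact (Ioo_subset_Ioo ha₁pos.le le_rfl).eventuallyLE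
    have h3 : δ * c₀ ≤ ∫ y in Ioo a₁ x₁, β y * U y := by
      have hconst : (∫ _ in Ioo a₁ x₁, (δ * c₀)) = δ * c₀ := by
        rw [setIntegral_const, Real.volume_real_Ioo_of_le (by linarith : a₁ ≤ x₁), smul_eq_mul,
          show x₁ - a₁ = 1 by rw [hx₁def]; ring, one_mul]
      rw [← hconst]
      apply integral_mono_ae
      · exact (integrableOn_const (by rw [Real.volume_Ioo]; exact ENNReal.ofReal_ne_top))
      · exact hβUint.mono_set
          (Ioo_subset_Ioo ha₁pos.le (by linarith : x₁ ≤ R))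
      · filter_upwards [ae_restrict_mem measurableSet_Ioo, ae_restrict_of_ae hkey'] with y hy hk
        have hypos : 0 < y := lt_trans ha₁pos hy.1
        have hyIoo : y ∈ Ioo (0:ℝ) R := ⟨hypos, by linarith [hy.2]⟩
        obtain ⟨hτηpos, hδτ, -⟩ := hk hyIoo
        have hτηy : τη y = τ y := hτηeq y hy.1.le
        have hτypos : 0 < τ y := hτηy ▸ hτηpos
        have hβy : ε₂ * x₁ ^ (-ν₂) ≤ β y := by
          have ha : x₁ ^ (-ν₂) ≤ y ^ (-ν₂) := hrpow_anti y x₁ ν₂ hypos hy.2.le hν₂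
          exact le_trans (mul_le_mul_of_nonneg_left ha hε₂.le) (hβlb y hy.1.le)
        have hτy : τ y ≤ M₁ * x₁ ^ μ₁ := by
          have h5 : y ^ μ₁ ≤ x₁ ^ μ₁ := Real.rpow_le_rpow hypos.le hy.2.le hμ₁
          exact le_trans (hτub y hy.1.le) (mul_le_mul_of_nonneg_left h5 hM₁.le)
        have hUy : δ / τ y ≤ U y := hτηy ▸ hδτ
        calc δ * c₀ = (ε₂ * x₁ ^ (-ν₂)) * (δ / (M₁ * x₁ ^ μ₁)) := by
              rw [hc₀def]; ring
          _ ≤ β y * (δ / τ y) := by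
              apply mul_le_mul hβy ?_ (by positivity) (hβ0 y hypos)
              exact div_le_div_of_nonneg_left hδpos.le hτypos hτy
          _ ≤ β y * U y := mul_le_mul_of_nonneg_left hUy (hβ0 y hypos)
    linarith
  -- Gronwall
  have hgron : ∀ x ∈ Icc x₁ R, (δ * c₀) * (x / x₁) ^ (n + 1) ≤ G x := by
    apply gronwall_pow G x₁ R (δ * c₀) n hx₁pos (by positivity) hGcont.continuousOn
    intro x hx
    have hGadd : G x = G x₁ + ∫ t in x₁..x, f t := by
      show (∫ t in (0:ℝ)..x, f t) = (∫ t in (0:ℝ)..x₁, f t) + _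
      rw [intervalIntegral.integral_add_adjacent_intervals
        (hfint.intervalIntegrable) (hfint.intervalIntegrable)]
    have haeR : ∀ᵐ t : ℝ ∂(volume : Measure ℝ), t ≠ R := by
      rw [ae_iff]
      simp only [ne_eq, not_not, setOf_eq_eq_singleton]
      exact Real.volume_singleton
    have hmono2 : (∫ t in x₁..x, ((n : ℝ) + 1) / t * G t) ≤ ∫ t in x₁..x, f t := by
      apply intervalIntegral.integral_mono_ae_restrict hx.1 ?_ (hfint.intervalIntegrable)
      · filter_upwards [ae_restrict_of_ae hkey', ae_restrict_mem measurableSet_Icc,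
          ae_restrict_of_ae haeR] with t hk ht htR
        have htR' : t < R := lt_of_le_of_ne (ht.2.trans hx.2) htR
        have htpos : 0 < t := lt_of_lt_of_le hx₁pos ht.1
        have htIoo : t ∈ Ioo (0:ℝ) R := ⟨htpos, htR'⟩
        obtain ⟨hτηpos, -, hGτ⟩ := hk htIoo
        have ht1 : a₁ ≤ t := by
          have := ht.1; rw [hx₁def] at this; linarith
        have hτηt : τη t = τ t := hτηeq t ht1
        obtain ⟨hτtpos, hβt⟩ := hβτ t ht1
        have hGt0 : 0 ≤ G t := hG0 t htpos.le
        have hft : f t = β t * U t := indicator_of_mem htIoo _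
        rw [hft]
        have hUt : G t / τ t ≤ U t := by rw [← hτηt]; exact hGτ
        calc ((n : ℝ) + 1) / t * G t = (((n : ℝ) + 1) * τ t / t) * (G t / τ t) := by
              field_simp
          _ ≤ β t * (G t / τ t) :=
              mul_le_mul_of_nonneg_right hβt (div_nonneg hGt0 hτtpos.le)
          _ ≤ β t * U t := mul_le_mul_of_nonneg_left hUt (hβ0 t htpos)
      · apply ContinuousOn.intervalIntegrable
        apply ContinuousOn.mul
        · exact continuousOn_const.div continuousOn_id fun t ht => by
            rw [uIcc_of_le hx.1] at ht
            exact (lt_of_lt_of_le hx₁pos ht.1).ne'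
        · exact hGcont.continuousOn
    linarith
  -- final bound
  have hstep1 : (∫ y in Ioo (R/2) R, U y) ≤ ∫ y in Ioo (0:ℝ) R, U y :=
    setIntegral_mono_set hUint hU (Ioo_subset_Ioo (by linarith) le_rfl).eventuallyLE
  set L : ℝ := δ * c₀ * ((R / (2 * x₁)) ^ (n + 1) / (M₁ * R ^ μ₁)) with hLdef
  have hRμ₁pos : 0 < R ^ μ₁ := Real.rpow_pos_of_pos hRpos _
  have hstep2 : L * (R/2) ≤ ∫ y in Ioo (R/2) R, U y := by
    have hconst : (∫ _ in Ioo (R/2) R, L) = (R/2) * L := by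
      rw [setIntegral_const, Real.volume_real_Ioo_of_le (by linarith : R/2 ≤ R), smul_eq_mul]
      ring_nf
    have hmono3 : (∫ _ in Ioo (R/2) R, L) ≤ ∫ y in Ioo (R/2) R, U y := by
      apply integral_mono_ae
      · exact (integrableOn_const (by rw [Real.volume_Ioo]; exact ENNReal.ofReal_ne_top))
      · exact hUint.mono_set (Ioo_subset_Ioo (by linarith) le_rfl)
      · filter_upwards [ae_restrict_mem measurableSet_Ioo, ae_restrict_of_ae hkey'] with y hy hk
        have hypos : 0 < y := lt_trans (by linarith) hy.1
        have hyIoo : y ∈ Ioo (0:ℝ) R := ⟨hypos, hy.2⟩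
        obtain ⟨hτηpos, -, hGτ⟩ := hk hyIoo
        have hya₁ : a₁ ≤ y := by linarith [hy.1]
        have hτηy : τη y = τ y := hτηeq y hya₁
        have hτypos : 0 < τ y := hτηy ▸ hτηpos
        have hGy : δ * c₀ * (y / x₁) ^ (n + 1) ≤ G y :=
          hgron y ⟨by linarith [hy.1], hy.2.le⟩
        have hτyub : τ y ≤ M₁ * R ^ μ₁ :=
          (hτub y hya₁).trans (mul_le_mul_of_nonneg_left
            (Real.rpow_le_rpow hypos.le hy.2.le hμ₁) hM₁.le)
        have hUy : G y / τ y ≤ U y := hτηy ▸ hGτ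
        have hbase : R / (2 * x₁) ≤ y / x₁ := by
          rw [div_le_div_iff₀ (by positivity) hx₁pos]
          have h6 : R ≤ 2 * y := by linarith [hy.1]
          calc R * x₁ ≤ (2 * y) * x₁ := mul_le_mul_of_nonneg_right h6 hx₁pos.le
            _ = y * (2 * x₁) := by ring
        have hbase0 : 0 ≤ R / (2 * x₁) := by positivity
        have hnum : δ * c₀ * (R / (2 * x₁)) ^ (n + 1) ≤ G y := by
          refine le_trans ?_ hGy
          exact mul_le_mul_of_nonneg_left (pow_le_pow_left₀ hbase0 hbase (n + 1))
            (by positivity)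
        calc L = (δ * c₀ * (R / (2 * x₁)) ^ (n + 1)) / (M₁ * R ^ μ₁) := by
              rw [hLdef]; ring
          _ ≤ G y / (M₁ * R ^ μ₁) :=
              (div_le_div_iff_of_pos_right (by positivity)).2 hnum
          _ ≤ G y / τ y := div_le_div_of_nonneg_left (hG0 y hypos.le) hτypos hτyub
          _ ≤ U y := hUy
    linarith
  have hfinal : L * (R/2) ≤ 1 := by
    rw [← hnorm]; exact hstep2.trans hstep1
  -- lower bound for L * (R/2)
  have hpow : R ^ μ₁ * R ^ ν₁ * R ≤ R ^ (n + 1) := by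
    have h1 : (R:ℝ) ^ (n + 1) = R ^ ((n:ℝ) + 1) := by
      rw [← Real.rpow_natCast R (n + 1)]
      norm_num
    have h2 : R ^ (μ₁ + ν₁ + 1) ≤ R ^ ((n : ℝ) + 1) :=
      Real.rpow_le_rpow_of_exponent_le hR1 (by linarith)
    have h3 : R ^ (μ₁ + ν₁ + 1) = R ^ μ₁ * R ^ ν₁ * R := by
      rw [Real.rpow_add hRpos, Real.rpow_add hRpos, Real.rpow_one]
    rw [h1, ← h3]
    exact h2
  have hLlb : c₅ * R ≤ L * (R/2) := by
    have hRν₁pos : 0 < R ^ ν₁ := Real.rpow_pos_of_pos hRpos _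
    have h2x₁pos : (0:ℝ) < (2 * x₁) ^ (n + 1) := by positivity
    have hRnν : R ^ (-ν₁) = (R ^ ν₁)⁻¹ := Real.rpow_neg hRpos.le _
    have hδ2 : c₂ * R ^ (-ν₁) / (2 * R) * c₀
        * ((R ^ μ₁ * R ^ ν₁ * R / (2 * x₁) ^ (n + 1)) / (M₁ * R ^ μ₁)) * (R/2)
        = c₅ * R := by
      rw [hRnν, hc₅def]
      field_simp
      ring
    rw [← hδ2, hLdef]
    have hpow2 : R ^ μ₁ * R ^ ν₁ * R / (2 * x₁) ^ (n + 1) ≤ (R / (2 * x₁)) ^ (n + 1) := by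
      rw [div_pow]
      exact (div_le_div_iff_of_pos_right h2x₁pos).2 hpow
    gcongr
  have hcontra : (1:ℝ) < c₅ * R := by
    have h := (mul_lt_mul_iff_right₀ hc₅).2 hRc
    rwa [mul_one_div, div_self hc₅.ne'] at h
  linarith
end
end

section
/- (Lower bound on the eigenvalue.) Let κ be a fragmentation kernel satisfying (K1), let τ, β be measurable and nonnegative, and let (λ,U) solve the truncated eigenproblem on (0,∞) (R = ∞) with inflow δ = 0 in integrated form, with U ≥ 0, ∫₀^∞ U = 1, βU ∈ L¹(0,∞), and τ(x)U(x) → 0 as x → ∞. Then λ = ∫₀^∞ β(y)U(y) dy ≥ 0, and τ(x)U(x) ≤ 2λ for a.e. x > 0; in particular λ ≥ (1/2)·ess sup_{x>0} τ(x)U(x). -/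
open MeasureTheory Set Filter
open scoped ENNReal NNReal Topology

noncomputable section

lemma kernel_toReal_aesm (κ : ℝ → Measure ℝ)
    (hκfin : ∀ y : ℝ, 0 < y → IsFiniteMeasure (κ y))
    (hκmeas : KernelMeasurable κ) (x : ℝ) (hx : 0 ≤ x) :
    AEStronglyMeasurable (fun y => ((κ y) (Set.Icc 0 x)).toReal)
      (volume.restrict (Set.Ioi 0)) := by
  set ψ : ℕ → ℝ → ℝ := fun n t => max 0 (1 - n * Metric.infDist t (Set.Icc 0 x)) with hψ
  have hψc : ∀ n, Continuous (ψ n) := fun n =>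
    continuous_const.max (continuous_const.sub
      (continuous_const.mul (Metric.continuous_infDist_pt _)))
  have hψ01 : ∀ n t, 0 ≤ ψ n t ∧ ψ n t ≤ 1 := by
    intro n t
    refine ⟨le_max_left _ _, max_le zero_le_one ?_⟩
    have h1 : (0:ℝ) ≤ (n:ℝ) * Metric.infDist t (Set.Icc 0 x) :=
      mul_nonneg (Nat.cast_nonneg n) Metric.infDist_nonneg
    linarith
  have hpt : ∀ t, Tendsto (fun n => ψ n t) atTop
      (𝓝 (Set.indicator (Set.Icc 0 x) (fun _ => (1:ℝ)) t)) := by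
    intro t
    by_cases ht : t ∈ Set.Icc 0 x
    · rw [Set.indicator_of_mem ht]
      have : ∀ n, ψ n t = 1 := by
        intro n
        simp [hψ, Metric.infDist_zero_of_mem ht]
      simp only [this]
      exact tendsto_const_nhds
    · rw [Set.indicator_of_notMem ht]
      have hd : 0 < Metric.infDist t (Set.Icc 0 x) :=
        (isClosed_Icc.notMem_iff_infDist_pos (Set.nonempty_Icc.mpr hx)).mp ht
      have hev : ∀ᶠ n : ℕ in atTop, ψ n t = 0 := by
        filter_upwards [eventually_ge_atTop ⌈(Metric.infDist t (Set.Icc 0 x))⁻¹⌉₊]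
          with n hn
        have h1 : (Metric.infDist t (Set.Icc 0 x))⁻¹ ≤ (n:ℝ) :=
          le_trans (Nat.le_ceil _) (Nat.cast_le.mpr hn)
        have h2 : (1:ℝ) ≤ (n:ℝ) * Metric.infDist t (Set.Icc 0 x) := by
          rw [← inv_mul_cancel₀ hd.ne']
          exact mul_le_mul_of_nonneg_right h1 hd.le
        simp only [hψ]
        exact max_eq_left (by linarith)
      exact Tendsto.congr' (hev.mono fun n hn => hn.symm) tendsto_const_nhds
  have hint : ∀ y : ℝ, 0 < y →
      Tendsto (fun n => ∫ t, ψ n t ∂(κ y)) atTop (𝓝 (((κ y) (Set.Icc 0 x)).toReal)) := by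
    intro y hy
    haveI := hκfin y hy
    have h := tendsto_integral_of_dominated_convergence (μ := κ y)
      (F := fun n => ψ n) (f := Set.indicator (Set.Icc 0 x) (fun _ => (1:ℝ)))
      (bound := fun _ => (1:ℝ))
      (fun n => (hψc n).aestronglyMeasurable) (integrable_const 1)
      (fun n => ae_of_all _ fun t => by
        rw [Real.norm_eq_abs, abs_of_nonneg (hψ01 n t).1]; exact (hψ01 n t).2)
      (ae_of_all _ hpt)
    have heq : ∫ t, Set.indicator (Set.Icc 0 x) (fun _ => (1:ℝ)) t ∂(κ y)
        = ((κ y) (Set.Icc 0 x)).toReal := by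
      exact integral_indicator_one (μ := κ y) (measurableSet_Icc (a := (0:ℝ)) (b := x))
    rwa [heq] at h
  refine aestronglyMeasurable_of_tendsto_ae atTop
    (fun n => ((hκmeas (ψ n) (hψc n)).aestronglyMeasurable).restrict) ?_
  filter_upwards [ae_restrict_mem measurableSet_Ioi] with y hy
  exact hint y hy


/-- **Lower bound on the eigenvalue.** If `(lam,U)` solves the eigenproblem on
`(0,∞)` in integrated form with `δ = 0`, `U ≥ 0`, `∫U = 1` and `τU → 0` at
infinity, then `lam = ∫βU ≥ 0`, `τU ≤ 2lam` a.e., and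
`lam ≥ (1/2) ess sup τU`. -/
theorem eigenvalue_lower_bound
    (κ : ℝ → Measure ℝ)
    (hκfin : ∀ y : ℝ, 0 < y → IsFiniteMeasure (κ y))
    (hκsupp : KernelSupport κ) (hκmeas : KernelMeasurable κ) (hK1 : K1 κ)
    (τ β : ℝ → ℝ) (hτmeas : Measurable τ) (hτ0 : ∀ x : ℝ, 0 ≤ τ x)
    (hβmeas : Measurable β) (hβ0 : ∀ x : ℝ, 0 ≤ β x)
    (lam : ℝ) (U : ℝ → ℝ)
    (hTE : TruncEigen τ β κ 0 (Set.Ioi 0) lam U)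
    (hU0 : ∀ᵐ x ∂(volume.restrict (Set.Ioi (0:ℝ))), 0 ≤ U x)
    (hUnorm : ∫ x in Set.Ioi (0:ℝ), U x = 1)
    (hlim : Tendsto (fun x => τ x * U x) atTop (nhds 0)) :
    lam = ∫ y in Set.Ioi (0:ℝ), β y * U y ∧ 0 ≤ lam ∧
    (∀ᵐ x ∂(volume.restrict (Set.Ioi (0:ℝ))), τ x * U x ≤ 2 * lam) ∧
    (1 / 2) * essSup (fun x => τ x * U x) (volume.restrict (Set.Ioi (0:ℝ))) ≤ lam := by
  obtain ⟨hUint, hβUint, heqae⟩ := hTE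
  set I : ℝ := ∫ y in Set.Ioi (0:ℝ), β y * U y with hI
  -- nonnegativity of βU a.e.
  have hβU0 : ∀ᵐ y ∂(volume.restrict (Set.Ioi (0:ℝ))), 0 ≤ β y * U y := by
    filter_upwards [hU0] with y hy using mul_nonneg (hβ0 y) hy
  have hI0 : 0 ≤ I := integral_nonneg_of_ae hβU0
  -- toReal of kernel measure is in [0,1]
  have htr01 : ∀ y : ℝ, 0 < y → ∀ x : ℝ, ((κ y) (Set.Icc 0 x)).toReal ≤ 1 := by
    intro y hy x
    haveI := hK1 y hy
    have h1 : (κ y) (Set.Icc 0 x) ≤ 1 := prob_le_one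
    simpa using ENNReal.toReal_mono ENNReal.one_ne_top h1
  -- integrability of the kernel integrand
  have hKint : ∀ x : ℝ, 0 < x →
      IntegrableOn (fun y => β y * U y * ((κ y) (Set.Icc 0 x)).toReal) (Set.Ioi 0) := by
    intro x hx
    refine Integrable.mono hβUint
      (hβUint.aestronglyMeasurable.mul (kernel_toReal_aesm κ hκfin hκmeas x hx.le)) ?_
    filter_upwards [ae_restrict_mem measurableSet_Ioi] with y hy
    rw [Real.norm_eq_abs, Real.norm_eq_abs, abs_mul]
    have h1 : |((κ y) (Set.Icc 0 x)).toReal| ≤ 1 := by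
      rw [abs_of_nonneg ENNReal.toReal_nonneg]; exact htr01 y hy x
    calc |β y * U y| * |((κ y) (Set.Icc 0 x)).toReal| ≤ |β y * U y| * 1 :=
          mul_le_mul_of_nonneg_left h1 (abs_nonneg _)
      _ = |β y * U y| := mul_one _
  -- upper bound: K x ≤ I
  have hKle : ∀ x : ℝ, 0 < x →
      (∫ y in Set.Ioi (0:ℝ), β y * U y * ((κ y) (Set.Icc 0 x)).toReal) ≤ I := by
    intro x hx
    refine integral_mono_ae (hKint x hx) hβUint ?_
    filter_upwards [hβU0, ae_restrict_mem measurableSet_Ioi] with y h0 hy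
    exact mul_le_of_le_one_right h0 (htr01 y hy x)
  -- lower bound: ∫_{Ioo 0 x} βU ≤ K x
  have hBleK : ∀ x : ℝ, 0 < x →
      (∫ y in Set.Ioo (0:ℝ) x, β y * U y)
        ≤ ∫ y in Set.Ioi (0:ℝ), β y * U y * ((κ y) (Set.Icc 0 x)).toReal := by
    intro x hx
    have hind : Integrable ((Set.Ioc (0:ℝ) x).indicator (fun y => β y * U y))
        (volume.restrict (Set.Ioi (0:ℝ))) := hβUint.indicator measurableSet_Ioc
    have hle : (∫ y in Set.Ioi (0:ℝ),
          (Set.Ioc (0:ℝ) x).indicator (fun y => β y * U y) y)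
        ≤ ∫ y in Set.Ioi (0:ℝ), β y * U y * ((κ y) (Set.Icc 0 x)).toReal := by
      refine integral_mono_ae hind (hKint x hx) ?_
      filter_upwards [hβU0, ae_restrict_mem measurableSet_Ioi] with y h0 hy
      by_cases hyx : y ∈ Set.Ioc (0:ℝ) x
      · rw [Set.indicator_of_mem hyx]
        have hcompl : (κ y) (Set.Icc 0 x)ᶜ = 0 :=
          measure_mono_null (Set.compl_subset_compl.mpr
            (Set.Icc_subset_Icc le_rfl hyx.2)) (hκsupp y hy)
        haveI := hK1 y hy
        have h1 : (κ y) (Set.Icc 0 x) = 1 :=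
          (prob_compl_eq_zero_iff measurableSet_Icc).mp hcompl
        rw [h1]
        simp
      · rw [Set.indicator_of_notMem hyx]
        exact mul_nonneg h0 ENNReal.toReal_nonneg
    have heq2 : (∫ y in Set.Ioi (0:ℝ),
          (Set.Ioc (0:ℝ) x).indicator (fun y => β y * U y) y)
        = ∫ y in Set.Ioo (0:ℝ) x, β y * U y := by
      rw [integral_indicator measurableSet_Ioc, Measure.restrict_restrict measurableSet_Ioc,
        Set.inter_eq_self_of_subset_left Set.Ioc_subset_Ioi_self,
        integral_Ioc_eq_integral_Ioo]
    rw [← heq2]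
    exact hle
  -- a.e. nonnegativity of partial integrals
  have hA0 : ∀ x : ℝ, 0 ≤ ∫ y in Set.Ioo (0:ℝ) x, U y := fun x =>
    integral_nonneg_of_ae (ae_restrict_of_ae_restrict_of_subset Set.Ioo_subset_Ioi_self hU0)
  have hB0 : ∀ x : ℝ, 0 ≤ ∫ y in Set.Ioo (0:ℝ) x, β y * U y := fun x =>
    integral_nonneg_of_ae (ae_restrict_of_ae_restrict_of_subset Set.Ioo_subset_Ioi_self hβU0)
  -- existence of good points arbitrarily far out
  have hexists : ∀ n : ℕ, ∃ zz : ℝ, (n:ℝ) < zz ∧ 0 < zz ∧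
      τ zz * U zz + lam * (∫ y in Set.Ioo 0 zz, U y) + (∫ y in Set.Ioo 0 zz, β y * U y)
        = 0 + 2 * ∫ y in Set.Ioi (0:ℝ), β y * U y * ((κ y) (Set.Icc 0 zz)).toReal := by
    intro n
    by_contra hcon
    push_neg at hcon
    have h1 : ∀ᵐ zz ∂(volume.restrict (Set.Ioi (0:ℝ))), ¬ ((n:ℝ) < zz) := by
      filter_upwards [heqae, ae_restrict_mem measurableSet_Ioi] with zz heq hz hlt
      exact absurd heq (hcon zz hlt hz)
    rw [ae_iff] at h1
    simp only [not_not] at h1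
    have h2 : {zz : ℝ | (n:ℝ) < zz} = Set.Ioi (n:ℝ) := rfl
    rw [h2, Measure.restrict_apply measurableSet_Ioi, Set.Ioi_inter_Ioi] at h1
    simp [Real.volume_Ioi] at h1
  choose z hz1 hz2 hz3 using hexists
  have htendz : Tendsto z atTop atTop :=
    tendsto_atTop_mono (fun n => (hz1 n).le) tendsto_natCast_atTop_atTop
  -- limits of the partial integrals along z
  have hAtend : Tendsto (fun n => ∫ y in Set.Ioo (0:ℝ) (z n), U y) atTop (𝓝 1) := by
    have h := intervalIntegral_tendsto_integral_Ioi (0:ℝ) hUint htendz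
    rw [hUnorm] at h
    refine h.congr fun n => ?_
    rw [intervalIntegral.integral_of_le (hz2 n).le, integral_Ioc_eq_integral_Ioo]
  have hBtend : Tendsto (fun n => ∫ y in Set.Ioo (0:ℝ) (z n), β y * U y) atTop (𝓝 I) := by
    have h := intervalIntegral_tendsto_integral_Ioi (0:ℝ) hβUint htendz
    refine h.congr fun n => ?_
    rw [intervalIntegral.integral_of_le (hz2 n).le, integral_Ioc_eq_integral_Ioo]
  have hτtend : Tendsto (fun n => τ (z n) * U (z n)) atTop (𝓝 0) := hlim.comp htendz
  -- lam = I
  have hIlelam : I ≤ lam := by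
    have hle : ∀ n, (∫ y in Set.Ioo (0:ℝ) (z n), β y * U y)
        ≤ τ (z n) * U (z n) + lam * (∫ y in Set.Ioo (0:ℝ) (z n), U y) := by
      intro n
      have heq := hz3 n
      have h1 := hBleK (z n) (hz2 n)
      linarith
    have htt : Tendsto (fun n => τ (z n) * U (z n)
        + lam * (∫ y in Set.Ioo (0:ℝ) (z n), U y)) atTop (𝓝 lam) := by
      have := hτtend.add (hAtend.const_mul lam)
      simpa using this
    exact le_of_tendsto_of_tendsto' hBtend htt hle
  have hlamleI : lam ≤ I := by
    have hle : ∀ n, τ (z n) * U (z n) + lam * (∫ y in Set.Ioo (0:ℝ) (z n), U y)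
        + (∫ y in Set.Ioo (0:ℝ) (z n), β y * U y) ≤ 2 * I := by
      intro n
      have heq := hz3 n
      have h1 := hKle (z n) (hz2 n)
      linarith
    have htt : Tendsto (fun n => τ (z n) * U (z n)
        + lam * (∫ y in Set.Ioo (0:ℝ) (z n), U y)
        + (∫ y in Set.Ioo (0:ℝ) (z n), β y * U y)) atTop (𝓝 (lam + I)) := by
      have := (hτtend.add (hAtend.const_mul lam)).add hBtend
      simpa using this
    have := le_of_tendsto' htt hle
    linarith
  have hlamI : lam = I := le_antisymm hlamleI hIlelam
  have hlam0 : 0 ≤ lam := hlamI ▸ hI0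
  -- a.e. bound τU ≤ 2 lam
  have haebound : ∀ᵐ x ∂(volume.restrict (Set.Ioi (0:ℝ))), τ x * U x ≤ 2 * lam := by
    filter_upwards [heqae, ae_restrict_mem measurableSet_Ioi] with x heq hx
    have h1 := hKle x hx
    have h2 := hA0 x
    have h3 := hB0 x
    have h4 : 0 ≤ lam * (∫ y in Set.Ioo (0:ℝ) x, U y) := mul_nonneg hlam0 h2
    rw [hlamI]
    linarith
  refine ⟨hlamI, hlam0, haebound, ?_⟩
  -- essSup bound
  have hne : (volume.restrict (Set.Ioi (0:ℝ))) ≠ 0 := by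
    simp [Measure.restrict_eq_zero, Real.volume_Ioi]
  haveI : (ae (volume.restrict (Set.Ioi (0:ℝ)))).NeBot := ae_neBot.mpr hne
  have hcobdd : IsCoboundedUnder (· ≤ ·) (ae (volume.restrict (Set.Ioi (0:ℝ))))
      (fun x => τ x * U x) := by
    refine isCoboundedUnder_le_of_eventually_le _ (x := 0) ?_
    filter_upwards [hU0] with x hx using mul_nonneg (hτ0 x) hx
  have hess : essSup (fun x => τ x * U x) (volume.restrict (Set.Ioi (0:ℝ))) ≤ 2 * lam :=
    limsup_le_of_le hcobdd haebound
  linarith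
end
end

section
/- (Interior mass of the fragmentation kernel.) Let κ be a fragmentation kernel satisfying (K1) and (K2), and suppose there exist C > 0 and γ > 0 such that κ([0,x],y) ≤ C(x/y)^γ for all 0 < x ≤ y. Then for every y > 0 and every η ∈ (0,1/2): κ([ηy,(1−η)y], y) ≥ 1 − Cη^γ − 1/(2(1−η)). Consequently, inf_{y>0} lim_{η→0⁺} κ([ηy,(1−η)y], y) ≥ 1/2 > 0. -/
open MeasureTheory Set Filter
open scoped ENNReal NNReal

noncomputable section

/-- (K3): the second moment of `κ` is uniformly less than `1/2`. -/
def K3 (κ : ℝ → Measure ℝ) : Prop :=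
  ∃ c : ℝ, c < 1 / 2 ∧ ∀ y : ℝ, 0 < y → (∫ x, (x / y) ^ 2 ∂(κ y)) ≤ c

/-- **Interior mass of the fragmentation kernel.** Under (K1), (K2) and the
no-shattering bound `κ([0,x],y) ≤ C(x/y)^γ` with `γ > 0`, the mass of
`κ(·,y)` on `[ηy,(1-η)y]` is at least `1 - Cη^γ - 1/(2(1-η))`; consequently
its liminf as `η → 0⁺` is at least `1/2 > 0`, uniformly in `y`. -/
theorem kernel_interior_mass
    (κ : ℝ → Measure ℝ)
    (hκfin : ∀ y : ℝ, 0 < y → IsFiniteMeasure (κ y))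
    (hκsupp : KernelSupport κ) (hκmeas : KernelMeasurable κ)
    (hK1 : K1 κ) (hK2 : K2 κ)
    (C γ : ℝ) (hC : 0 < C) (hγ : 0 < γ)
    (hbound : ∀ x y : ℝ, 0 < x → x ≤ y →
      ((κ y) (Set.Icc 0 x)).toReal ≤ C * (x / y) ^ γ) :
    (∀ y : ℝ, 0 < y → ∀ η : ℝ, 0 < η → η < 1 / 2 →
      1 - C * η ^ γ - 1 / (2 * (1 - η))
        ≤ ((κ y) (Set.Icc (η * y) ((1 - η) * y))).toReal) ∧
    (∀ y : ℝ, 0 < y →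
      (1 : ℝ) / 2 ≤ liminf (fun η : ℝ => ((κ y) (Set.Icc (η * y) ((1 - η) * y))).toReal)
        (nhdsWithin 0 (Set.Ioi 0))) := by
  have main : ∀ y : ℝ, 0 < y → ∀ η : ℝ, 0 < η → η < 1 / 2 →
      1 - C * η ^ γ - 1 / (2 * (1 - η))
        ≤ ((κ y) (Set.Icc (η * y) ((1 - η) * y))).toReal := by
    intro y hy η hη hη2
    haveI := hκfin y hy
    haveI := hK1 y hy
    set μ := κ y with hμ
    set a := η * y with ha
    set b := (1 - η) * y with hb
    have hηlt1 : η < 1 := by linarith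
    have hb_pos : 0 < b := mul_pos (by linarith) hy
    have ha_pos : 0 < a := by positivity
    have hab : a < b := by
      apply mul_lt_mul_of_pos_right _ hy
      linarith
    -- a.e. support
    have hae : ∀ᵐ x ∂μ, x ∈ Set.Icc 0 y := by
      rw [ae_iff]
      exact hκsupp y hy
    have hint : Integrable (fun x : ℝ => x) μ := by
      refine Integrable.mono' (integrable_const y) measurable_id.aestronglyMeasurable ?_
      filter_upwards [hae] with x hx
      rw [Real.norm_eq_abs, abs_of_nonneg hx.1]
      exact hx.2
    have hnonneg : 0 ≤ᵐ[μ] fun x : ℝ => x := hae.mono fun x hx => hx.1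
    -- Markov
    have hmarkov : (μ (Set.Ioi b)).toReal ≤ 1 / (2 * (1 - η)) := by
      have h1 := mul_meas_ge_le_integral_of_nonneg hnonneg hint b
      rw [hK2 y hy] at h1
      have h2 : μ (Set.Ioi b) ≤ μ {x | b ≤ x} := by
        apply measure_mono
        intro x hx
        exact le_of_lt (Set.mem_Ioi.mp hx)
      have h3 : (μ (Set.Ioi b)).toReal ≤ (μ {x | b ≤ x}).toReal :=
        ENNReal.toReal_mono (measure_ne_top μ _) h2
      have h4 : (μ {x | b ≤ x}).toReal ≤ (y / 2) / b :=
        (le_div_iff₀ hb_pos).2 (by rw [mul_comm]; exact h1)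
      have : (y / 2) / b = 1 / (2 * (1 - η)) := by
        rw [hb, div_div, div_eq_div_iff (by positivity) (by nlinarith)]
        ring
      linarith
    -- small end bound
    have hsmall : (μ (Set.Icc 0 a)).toReal ≤ C * η ^ γ := by
      have := hbound a y ha_pos (by nlinarith)
      rwa [ha, mul_div_assoc, div_self hy.ne', mul_one] at this
    -- decomposition
    have hcover : (1 : ℝ) ≤ (μ (Set.Icc 0 a)).toReal + (μ (Set.Icc a b)).toReal
        + (μ (Set.Ioi b)).toReal := by
      have hsub : μ Set.univ ≤ μ (Set.Icc 0 a) + μ (Set.Icc a b) + μ (Set.Ioi b) := by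
        have hIio : μ (Set.Iio a) ≤ μ (Set.Icc 0 a) := by
          have : Set.Iio a ⊆ Set.Icc 0 a ∪ (Set.Icc 0 y)ᶜ := by
            intro x hx
            rcases le_or_gt 0 x with h0 | h0
            · exact Or.inl ⟨h0, le_of_lt hx⟩
            · exact Or.inr (fun hc => absurd hc.1 (not_le.2 h0))
          calc μ (Set.Iio a) ≤ μ (Set.Icc 0 a ∪ (Set.Icc 0 y)ᶜ) := measure_mono this
            _ ≤ μ (Set.Icc 0 a) + μ (Set.Icc 0 y)ᶜ := measure_union_le _ _
            _ = μ (Set.Icc 0 a) := by rw [hκsupp y hy, add_zero]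
        have huniv : (Set.univ : Set ℝ) ⊆ Set.Iio a ∪ Set.Icc a b ∪ Set.Ioi b := by
          intro x _
          rcases lt_or_ge x a with h | h
          · exact Or.inl (Or.inl h)
          rcases le_or_gt x b with h' | h'
          · exact Or.inl (Or.inr ⟨h, h'⟩)
          · exact Or.inr h'
        calc μ Set.univ ≤ μ (Set.Iio a ∪ Set.Icc a b ∪ Set.Ioi b) := measure_mono huniv
          _ ≤ μ (Set.Iio a ∪ Set.Icc a b) + μ (Set.Ioi b) := measure_union_le _ _
          _ ≤ μ (Set.Iio a) + μ (Set.Icc a b) + μ (Set.Ioi b) := by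
              gcongr; exact measure_union_le _ _
          _ ≤ μ (Set.Icc 0 a) + μ (Set.Icc a b) + μ (Set.Ioi b) := by gcongr
      have := ENNReal.toReal_mono (by finiteness) hsub
      rw [measure_univ, ENNReal.toReal_one] at this
      refine this.trans ?_
      rw [ENNReal.toReal_add (by finiteness) (by finiteness),
        ENNReal.toReal_add (by finiteness) (by finiteness)]
    linarith
  refine ⟨main, fun y hy => ?_⟩
  set g : ℝ → ℝ := fun η => 1 - C * η ^ γ - 1 / (2 * (1 - η)) with hg
  have hgt : Tendsto g (nhdsWithin 0 (Set.Ioi 0)) (nhds (1 / 2)) := by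
    have h1 : Tendsto (fun η : ℝ => η ^ γ) (nhds 0) (nhds 0) := by
      have := (Real.continuousAt_rpow_const 0 γ (Or.inr hγ.le))
      simpa [Real.zero_rpow hγ.ne'] using this.tendsto
    have h2 : Tendsto g (nhds 0) (nhds (1 / 2)) := by
      have : Tendsto (fun η : ℝ => 1 - C * η ^ γ - 1 / (2 * (1 - η))) (nhds 0)
          (nhds (1 - C * 0 - 1 / (2 * (1 - 0)))) := by
        apply Tendsto.sub
        · exact tendsto_const_nhds.sub (tendsto_const_nhds.mul h1)
        · apply Tendsto.div tendsto_const_nhds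
          · exact tendsto_const_nhds.mul (tendsto_const_nhds.sub tendsto_id)
          · norm_num
      have e : (1:ℝ) - C * 0 - 1 / (2 * (1 - 0)) = 1 / 2 := by norm_num
      rw [e] at this
      exact this
    exact h2.mono_left nhdsWithin_le_nhds
  have hev : g ≤ᶠ[nhdsWithin 0 (Set.Ioi 0)]
      fun η : ℝ => ((κ y) (Set.Icc (η * y) ((1 - η) * y))).toReal := by
    have hmem : Set.Ioo (0 : ℝ) (1 / 2) ∈ nhdsWithin 0 (Set.Ioi 0) := by
      apply mem_nhdsWithin.2
      exact ⟨Set.Iio (1 / 2), isOpen_Iio, by norm_num, fun x hx => ⟨hx.2, hx.1⟩⟩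
    filter_upwards [hmem] with η hη
    exact main y hy η hη.1 hη.2
  have h12 : (1 : ℝ) / 2 = liminf g (nhdsWithin 0 (Set.Ioi 0)) := (hgt.liminf_eq).symm
  rw [h12]
  have hbdd : IsBoundedUnder (· ≥ ·) (nhdsWithin 0 (Set.Ioi 0)) g :=
    hgt.isBoundedUnder_ge
  have hcob : IsCoboundedUnder (· ≥ ·) (nhdsWithin 0 (Set.Ioi 0))
      (fun η : ℝ => ((κ y) (Set.Icc (η * y) ((1 - η) * y))).toReal) := by
    refine isCoboundedUnder_ge_of_le _ (x := 1) fun η => ?_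
    haveI := hK1 y hy
    haveI := hκfin y hy
    calc ((κ y) (Set.Icc (η * y) ((1 - η) * y))).toReal
        ≤ ((κ y) Set.univ).toReal :=
          ENNReal.toReal_mono (measure_ne_top _ _) (measure_mono (Set.subset_univ _))
      _ = 1 := by simp
  exact liminf_le_liminf hev hbdd hcob
end
end

section
/- (The no-shattering condition implies the second-moment condition.) Let κ be a fragmentation kernel satisfying (K1) and (K2), and suppose there exist C > 0 and γ > 0 such that κ([0,x],y) ≤ C(x/y)^γ for all 0 < x ≤ y. Then for every η ∈ (0,1/2) and every y > 0: ∫ (x/y)² dκ(x,y) ≤ 1/2 − η²·(1 − Cη^γ − 1/(2(1−η))). In particular, there exists a constant c < 1/2 such that ∫ (x/y)² dκ(x,y) ≤ c for all y > 0, i.e. condition (K3) holds. -/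
open MeasureTheory Set Filter
open scoped ENNReal NNReal

noncomputable section

/-- **The no-shattering condition implies the second-moment condition.** Under
(K1), (K2) and `κ([0,x],y) ≤ C(x/y)^γ` with `γ > 0`, for every `η ∈ (0,1/2)` and
`y > 0` the second moment of `κ(·,y)` is at most
`1/2 − η²(1 − Cη^γ − 1/(2(1−η)))`; in particular (K3) holds. -/
theorem no_shattering_implies_K3
    (κ : ℝ → Measure ℝ)
    (hκfin : ∀ y : ℝ, 0 < y → IsFiniteMeasure (κ y))
    (hκsupp : KernelSupport κ) (hκmeas : KernelMeasurable κ)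
    (hK1 : K1 κ) (hK2 : K2 κ)
    (C γ : ℝ) (hC : 0 < C) (hγ : 0 < γ)
    (hbound : ∀ x y : ℝ, 0 < x → x ≤ y →
      ((κ y) (Set.Icc 0 x)).toReal ≤ C * (x / y) ^ γ) :
    (∀ η : ℝ, 0 < η → η < 1 / 2 → ∀ y : ℝ, 0 < y →
      (∫ x, (x / y) ^ 2 ∂(κ y))
        ≤ 1 / 2 - η ^ 2 * (1 - C * η ^ γ - 1 / (2 * (1 - η)))) ∧
    K3 κ := by
  have main : ∀ η : ℝ, 0 < η → η < 1 / 2 → ∀ y : ℝ, 0 < y →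
      (∫ x, (x / y) ^ 2 ∂(κ y))
        ≤ 1 / 2 - η ^ 2 * (1 - C * η ^ γ - 1 / (2 * (1 - η))) := by
    intro η hη hη2 y hy
    set μ := κ y with hμdef
    have hμ : IsProbabilityMeasure μ := hK1 y hy
    have _ : IsFiniteMeasure μ := hκfin y hy
    have hae : ∀ᵐ x ∂μ, x ∈ Icc (0:ℝ) y := by
      exact mem_ae_iff.2 (hκsupp y hy)
    -- Integrability
    have hIid : Integrable (fun x : ℝ => x) μ := by
      refine Integrable.mono' (integrable_const y) measurable_id.aestronglyMeasurable ?_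
      filter_upwards [hae] with x hx
      rw [Real.norm_eq_abs, abs_le]
      exact ⟨by linarith [hx.1, hy], hx.2⟩
    have hIg : Integrable (fun x : ℝ => (x / y) * (1 - x / y)) μ := by
      refine Integrable.mono' (integrable_const 1)
        ((measurable_id.div_const y).mul
          ((measurable_const.sub (measurable_id.div_const y)))).aestronglyMeasurable ?_
      filter_upwards [hae] with x hx
      have h1 : 0 ≤ x / y := div_nonneg hx.1 hy.le
      have h2 : x / y ≤ 1 := (div_le_one hy).2 hx.2
      rw [Real.norm_eq_abs, abs_le]
      constructor <;> nlinarith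
    have hI2 : Integrable (fun x : ℝ => (x / y) ^ 2) μ := by
      refine Integrable.mono' (integrable_const 1)
        ((measurable_id.div_const y).pow_const 2).aestronglyMeasurable ?_
      filter_upwards [hae] with x hx
      have h1 : 0 ≤ x / y := div_nonneg hx.1 hy.le
      have h2 : x / y ≤ 1 := (div_le_one hy).2 hx.2
      rw [Real.norm_eq_abs, abs_le]
      constructor <;> nlinarith
    -- first moment
    have hm1 : (∫ x, x / y ∂μ) = 1 / 2 := by
      rw [integral_div, hK2 y hy]
      field_simp
    -- key identity
    have hkey : (∫ x, (x / y) ^ 2 ∂μ)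
        = 1 / 2 - ∫ x, (x / y) * (1 - x / y) ∂μ := by
      have : (∫ x, (x / y) ^ 2 ∂μ)
          = ∫ x, (x / y - (x / y) * (1 - x / y)) ∂μ := by
        congr 1; funext x; ring
      rw [this, integral_sub (hIid.div_const y) hIg, hm1]
    -- measure of middle set
    set S : Set ℝ := Icc (η * y) ((1 - η) * y) with hSdef
    have hSmeas : MeasurableSet S := measurableSet_Icc
    have hA : (μ (Icc 0 (η * y))).toReal ≤ C * η ^ γ := by
      have := hbound (η * y) y (by positivity) (by nlinarith)
      have hq : η * y / y = η := by field_simp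
      rwa [hq] at this
    have hB : (μ (Ioi ((1 - η) * y))).toReal ≤ 1 / (2 * (1 - η)) := by
      have hmk := mul_meas_ge_le_integral_of_nonneg
        (f := fun x : ℝ => x) (μ := μ)
        (by filter_upwards [hae] with x hx using hx.1) hIid ((1 - η) * y)
      rw [hK2 y hy] at hmk
      have hsub : μ (Ioi ((1 - η) * y)) ≤ μ {x | (1 - η) * y ≤ x} := by
        apply measure_mono; intro x hx; exact le_of_lt (Set.mem_Ioi.1 hx)
      have hsub' : (μ (Ioi ((1 - η) * y))).toReal ≤ (μ {x | (1 - η) * y ≤ x}).toReal :=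
        ENNReal.toReal_mono (measure_ne_top μ _) hsub
      have hpos : 0 < (1 - η) * y := by nlinarith
      rw [le_div_iff₀ (by nlinarith : (0:ℝ) < 2 * (1 - η))]
      have hstep := mul_le_mul_of_nonneg_right hmk (le_of_lt (by positivity : (0:ℝ) < 2 / y))
      calc (μ (Ioi ((1 - η) * y))).toReal * (2 * (1 - η))
          ≤ (μ {x | (1 - η) * y ≤ x}).toReal * (2 * (1 - η)) := by
            apply mul_le_mul_of_nonneg_right hsub'; nlinarith
        _ = ((1 - η) * y * (μ {x | (1 - η) * y ≤ x}).toReal) * (2 / y) := by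
            field_simp
        _ ≤ y / 2 * (2 / y) := hstep
        _ = 1 := by field_simp
    have hScompl : (μ Sᶜ).toReal ≤ C * η ^ γ + 1 / (2 * (1 - η)) := by
      have hsub : Sᶜ ⊆ Icc 0 (η * y) ∪ Ioi ((1 - η) * y) ∪ (Icc 0 y)ᶜ := by
        intro x hx
        by_cases hxy : x ∈ Icc (0:ℝ) y
        · rcases not_and_or.1 hx with h | h
          · left; left; exact ⟨hxy.1, le_of_lt (not_le.1 h)⟩
          · left; right; exact not_le.1 h
        · right; exact hxy
      have h1 : μ Sᶜ ≤ μ (Icc 0 (η * y)) + μ (Ioi ((1 - η) * y)) + 0 := by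
        calc μ Sᶜ ≤ μ (Icc 0 (η * y) ∪ Ioi ((1 - η) * y) ∪ (Icc 0 y)ᶜ) := measure_mono hsub
          _ ≤ μ (Icc 0 (η * y) ∪ Ioi ((1 - η) * y)) + μ (Icc 0 y)ᶜ := measure_union_le _ _
          _ ≤ μ (Icc 0 (η * y)) + μ (Ioi ((1 - η) * y)) + μ (Icc 0 y)ᶜ :=
              add_le_add (measure_union_le _ _) le_rfl
          _ = _ := by rw [hκsupp y hy]
      rw [add_zero] at h1
      have h2 : (μ Sᶜ).toReal ≤ (μ (Icc 0 (η * y))).toReal + (μ (Ioi ((1 - η) * y))).toReal := by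
        have := ENNReal.toReal_mono
          (by finiteness : μ (Icc 0 (η * y)) + μ (Ioi ((1 - η) * y)) ≠ ⊤) h1
        rwa [ENNReal.toReal_add (measure_ne_top μ _) (measure_ne_top μ _)] at this
      linarith
    have hSlow : 1 - C * η ^ γ - 1 / (2 * (1 - η)) ≤ (μ S).toReal := by
      have hsum : (μ S).toReal + (μ Sᶜ).toReal = 1 := by
        rw [← ENNReal.toReal_add (measure_ne_top μ _) (measure_ne_top μ _),
          measure_add_measure_compl hSmeas, measure_univ, ENNReal.toReal_one]
      linarith
    -- lower bound on the integral of g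
    have hglow : η ^ 2 * (1 - C * η ^ γ - 1 / (2 * (1 - η)))
        ≤ ∫ x, (x / y) * (1 - x / y) ∂μ := by
      have hgnn : 0 ≤ᶠ[ae μ] fun x : ℝ => (x / y) * (1 - x / y) := by
        filter_upwards [hae] with x hx
        have h1 : 0 ≤ x / y := div_nonneg hx.1 hy.le
        have h2 : x / y ≤ 1 := (div_le_one hy).2 hx.2
        simp only [Pi.zero_apply]
        nlinarith
      have hset : η ^ 2 * (μ S).toReal ≤ ∫ x in S, (x / y) * (1 - x / y) ∂μ := by
        apply setIntegral_ge_of_const_le_real hSmeas (measure_ne_top μ _)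
        · intro x hx
          have h1 : η ≤ x / y := (le_div_iff₀ hy).2 (by linarith [hx.1] : η * y ≤ x)
          have h2 : x / y ≤ 1 - η := (div_le_iff₀ hy).2 (by linarith [hx.2])
          have : η ≤ 1 - x / y := by linarith
          nlinarith
        · exact hIg.integrableOn
      have hfull := setIntegral_le_integral hIg hgnn (s := S)
      have hmul : η ^ 2 * (1 - C * η ^ γ - 1 / (2 * (1 - η))) ≤ η ^ 2 * (μ S).toReal :=
        mul_le_mul_of_nonneg_left hSlow (by positivity)
      linarith
    rw [hkey]; linarith
  refine ⟨main, ?_⟩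
  -- choose a concrete η
  set b : ℝ := ((8 * C)⁻¹) ^ (1 / γ) with hbdef
  have hbpos : 0 < b := Real.rpow_pos_of_pos (by positivity) _
  set η : ℝ := min (1 / 8) b with hηdef
  have hηpos : 0 < η := lt_min (by norm_num) hbpos
  have hη8 : η ≤ 1 / 8 := min_le_left _ _
  have hη2 : η < 1 / 2 := lt_of_le_of_lt hη8 (by norm_num)
  have hbγ : b ^ γ = (8 * C)⁻¹ := by
    rw [hbdef, ← Real.rpow_mul (by positivity : (0:ℝ) ≤ (8 * C)⁻¹),
      one_div_mul_cancel hγ.ne', Real.rpow_one]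
  have hηγ : C * η ^ γ ≤ 1 / 8 := by
    have h1 : η ^ γ ≤ b ^ γ :=
      Real.rpow_le_rpow hηpos.le (min_le_right _ _) hγ.le
    have h2 : C * η ^ γ ≤ C * (8 * C)⁻¹ := by
      rw [← hbγ]; exact mul_le_mul_of_nonneg_left h1 hC.le
    have : C * (8 * C)⁻¹ = 1 / 8 := by field_simp
    linarith
  have hden : 1 / (2 * (1 - η)) ≤ 4 / 7 := by
    have h1 : (7:ℝ) / 4 ≤ 2 * (1 - η) := by linarith
    have h2 : (0:ℝ) < 7 / 4 := by norm_num
    calc 1 / (2 * (1 - η)) ≤ 1 / (7 / 4) := by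
          apply one_div_le_one_div_of_le h2 h1
      _ = 4 / 7 := by norm_num
  have hE : (17:ℝ) / 56 ≤ 1 - C * η ^ γ - 1 / (2 * (1 - η)) := by linarith
  refine ⟨1 / 2 - η ^ 2 * (17 / 56), by nlinarith [pow_pos hηpos 2], ?_⟩
  intro y hy
  have := main η hηpos hη2 y hy
  have hmono : η ^ 2 * (17 / 56) ≤ η ^ 2 * (1 - C * η ^ γ - 1 / (2 * (1 - η))) :=
    mul_le_mul_of_nonneg_left hE (by positivity)
  linarith
end
end

section
/- (Direct and dual eigenvalues coincide.) Let τ, β be measurable nonnegative functions on (0,∞) and let k(x,y) ≥ 0 be a measurable fragmentation kernel density with k(x,y) = 0 for x > y and ∫₀^y k(x,y)dx = 1 for all y > 0. Suppose: U ≥ 0 with U ∈ L¹(0,∞), τU ∈ W^{1,1}(0,∞) with (τU)(0) = 0 and τ(x)U(x) → 0 as x → ∞, βU ∈ L¹(0,∞), and (τU)'(x) + (β(x)+λ₁)U(x) = 2∫_x^∞ β(y)k(x,y)U(y)dy for a.e. x > 0; and φ ∈ W^{1,∞}_loc(0,∞), φ ≥ 0, with −τ(x)φ'(x) + (β(x)+λ₂)φ(x)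 = 2β(x)∫₀ˣ k(z,x)φ(z)dz for a.e. x > 0. Assume moreover the integrability conditions Uφ ∈ L¹(0,∞), βUφ ∈ L¹(0,∞), τU·|φ'| ∈ L¹(0,∞), ∫₀^∞∫₀^∞ β(y)k(x,y)U(y)φ(x)dxdy < ∞, and τ(x)U(x)φ(x) → 0 as x → 0⁺ and as x → ∞. If ∫₀^∞ U(x)φ(x)dx > 0, then λ₁ = λ₂. -/
open MeasureTheory Set Filter
open Topology
open scoped ENNReal NNReal

noncomputable section


lemma contOn_of_locLip (φ : ℝ → ℝ)
    (hφlip : ∀ K : Set ℝ, IsCompact K → K ⊆ Set.Ioi 0 →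
      ∃ L : ℝ≥0, LipschitzOnWith L φ K) : ContinuousOn φ (Set.Ioi 0) := by
  intro x hx
  have hx0 : (0:ℝ) < x := hx
  have hK : Set.Icc (x/2) (x+1) ⊆ Set.Ioi 0 := fun y hy => by
    have := hy.1; simp only [Set.mem_Ioi]; linarith
  obtain ⟨L, hL⟩ := hφlip _ isCompact_Icc hK
  have hnhds : Set.Icc (x/2) (x+1) ∈ 𝓝 x := Icc_mem_nhds (by linarith) (by linarith)
  exact ((hL.continuousOn x ⟨by linarith, by linarith⟩).continuousAt hnhds).continuousWithinAt

lemma lip_ftc (φ φD : ℝ → ℝ)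
    (hφlip : ∀ K : Set ℝ, IsCompact K → K ⊆ Set.Ioi 0 →
      ∃ L : ℝ≥0, LipschitzOnWith L φ K)
    (hd : ∀ᵐ x ∂(volume.restrict (Set.Ioi (0:ℝ))), HasDerivAt φ (φD x) x)
    {a b : ℝ} (ha : 0 < a) (hab : a ≤ b) :
    ∫ t in Set.Ioc a b, φD t = φ b - φ a := by
  have hcont := contOn_of_locLip φ hφlip
  have hb : (0:ℝ) < b := lt_of_lt_of_le ha hab
  have hKsub : Set.Icc a (b+1) ⊆ Set.Ioi 0 := fun y hy => lt_of_lt_of_le ha hy.1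
  obtain ⟨L, hL⟩ := hφlip (Set.Icc a (b+1)) isCompact_Icc hKsub
  have hsub : Set.Ioc a b ⊆ Set.Ioi (0:ℝ) := fun t ht => lt_trans ha ht.1
  have hdsub : ∀ᵐ t ∂(volume.restrict (Set.Ioc a b)), HasDerivAt φ (φD t) t :=
    ae_restrict_of_ae_restrict_of_subset hsub hd
  have hbound : ∀ᵐ t ∂(volume.restrict (Set.Ioc a b)), ‖φD t‖ ≤ (L:ℝ) := by
    filter_upwards [hdsub, ae_restrict_mem measurableSet_Ioc] with t hdt htmem
    exact hdt.le_of_lipschitzOn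
      (Icc_mem_nhds (by exact htmem.1) (by linarith [htmem.2])) hL
  have haesm : AEStronglyMeasurable φD (volume.restrict (Set.Ioc a b)) := by
    refine (measurable_deriv φ).aestronglyMeasurable.congr ?_
    filter_upwards [hdsub] with t ht using ht.deriv
  haveI : IsFiniteMeasure (volume.restrict (Set.Ioc a b)) :=
    ⟨by rw [Measure.restrict_apply_univ]; exact measure_Ioc_lt_top⟩
  have hφDint : IntegrableOn φD (Set.Ioc a b) :=
    ⟨haesm, HasFiniteIntegral.of_bounded hbound⟩
  set h : ℕ → ℝ := fun n => 1/(n+1) with hh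
  have hhpos : ∀ n, 0 < h n := fun n => by positivity
  have hhle1 : ∀ n, h n ≤ 1 := fun n => by
    rw [hh]; rw [div_le_one (by positivity)]; simp [Nat.cast_nonneg]
  have hh0 : Tendsto h atTop (𝓝 0) := tendsto_one_div_add_atTop_nhds_zero_nat
  -- general slope convergence
  have quot : ∀ (f : ℝ → ℝ) (c d : ℝ), HasDerivAt f d c →
      Tendsto (fun n => (f (c + h n) - f c) / h n) atTop (𝓝 d) := by
    intro f c d hf
    have hs := hasDerivAt_iff_tendsto_slope.mp hf
    have htend : Tendsto (fun n => c + h n) atTop (𝓝[≠] c) := by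
      refine tendsto_nhdsWithin_of_tendsto_nhds_of_eventually_within _ ?_ ?_
      · simpa using tendsto_const_nhds.add hh0
      · exact Eventually.of_forall fun n => by
          simp only [Set.mem_compl_iff, Set.mem_singleton_iff]
          intro hcc; nlinarith [hhpos n, hcc]
    refine (hs.comp htend).congr fun n => ?_
    simp [Function.comp, slope_def_field, add_sub_cancel_left]
  -- interval integrability of φ on positive intervals
  have hφii : ∀ u v : ℝ, 0 < u → IntervalIntegrable φ volume u v → True := fun _ _ _ _ => trivial
  have hii : ∀ u v : ℝ, 0 < u → 0 < v → IntervalIntegrable φ volume u v := by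
    intro u v hu hv
    apply ContinuousOn.intervalIntegrable
    apply hcont.mono
    intro t ht
    rcases le_total u v with huv | huv
    · rw [Set.uIcc_of_le huv] at ht; exact lt_of_lt_of_le hu ht.1
    · rw [Set.uIcc_of_ge huv] at ht; exact lt_of_lt_of_le hv ht.1
  set Φ : ℝ → ℝ := fun u => ∫ t in a..u, φ t with hΦ
  have hΦd : ∀ c : ℝ, 0 < c → HasDerivAt Φ (φ c) c := by
    intro c hc
    refine intervalIntegral.integral_hasDerivAt_right (hii a c ha hc) ?_ ?_
    · exact hcont.stronglyMeasurableAtFilter isOpen_Ioi c hc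
    · exact hcont.continuousAt (Ioi_mem_nhds hc)
  -- integral identity for each n
  have hFn : ∀ n, ∫ t in Set.Ioc a b, (φ (t + h n) - φ t) / h n
      = (Φ (b + h n) - Φ b) / h n - (Φ (a + h n) - Φ a) / h n := by
    intro n
    have h1 : IntervalIntegrable (fun t => φ (t + h n)) volume a b := by
      have := (hii (a + h n) (b + h n) (by linarith [hhpos n]) (by linarith [hhpos n])).comp_add_right (h n)
      simpa using this
    have h2 : IntervalIntegrable φ volume a b := hii a b ha hb
    rw [← intervalIntegral.integral_of_le hab]
    have e1 : (∫ t in a..b, (φ (t + h n) - φ t) / h n)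
        = ((∫ t in a..b, φ (t + h n)) - ∫ t in a..b, φ t) / h n := by
      rw [intervalIntegral.integral_div, intervalIntegral.integral_sub h1 h2]
    rw [e1, intervalIntegral.integral_comp_add_right φ (h n)]
    have e2 : (∫ t in a + h n..b + h n, φ t) = Φ (b + h n) - Φ (a + h n) := by
      have := intervalIntegral.integral_add_adjacent_intervals
        (hii a (a + h n) ha (by linarith [hhpos n]))
        (hii (a + h n) (b + h n) (by linarith [hhpos n]) (by linarith [hhpos n]))
      rw [hΦ]; simp only []
      linarith [this]
    have e3 : Φ a = 0 := by rw [hΦ]; simp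
    have e4 : Φ b = ∫ t in a..b, φ t := rfl
    rw [e2, e3, e4]
    ring
  -- dominated convergence
  have hdc : Tendsto (fun n => ∫ t in Set.Ioc a b, (φ (t + h n) - φ t) / h n) atTop
      (𝓝 (∫ t in Set.Ioc a b, φD t)) := by
    refine tendsto_integral_of_dominated_convergence (fun _ => (L:ℝ)) ?_ (integrable_const _) ?_ ?_
    · intro n
      have hcn : ContinuousOn (fun t => (φ (t + h n) - φ t) / h n) (Set.Ioc a b) := by
        refine ContinuousOn.div_const (ContinuousOn.sub ?_ ?_) _
        · refine hcont.comp (Continuous.continuousOn (by continuity)) ?_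
          intro t ht
          simp only [Set.mem_Ioi]
          have h1 := hhpos n; have h2 := ht.1
          linarith
        · exact hcont.mono hsub
      exact hcn.aestronglyMeasurable measurableSet_Ioc
    · intro n
      filter_upwards [ae_restrict_mem measurableSet_Ioc] with t ht
      have hmem1 : t + h n ∈ Set.Icc a (b+1) :=
        ⟨by linarith [ht.1, hhpos n], by linarith [ht.2, hhle1 n]⟩
      have hmem2 : t ∈ Set.Icc a (b+1) := ⟨le_of_lt ht.1, by linarith [ht.2]⟩
      have := hL.dist_le_mul _ hmem1 _ hmem2
      rw [Real.dist_eq, Real.dist_eq] at this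
      have habs : |t + h n - t| = h n := by
        rw [add_sub_cancel_left, abs_of_pos (hhpos n)]
      rw [habs] at this
      rw [Real.norm_eq_abs, abs_div, abs_of_pos (hhpos n), div_le_iff₀ (hhpos n)]
      exact this
    · filter_upwards [hdsub] with t ht using quot φ t (φD t) ht
  have hlim : Tendsto (fun n => (Φ (b + h n) - Φ b) / h n - (Φ (a + h n) - Φ a) / h n) atTop
      (𝓝 (φ b - φ a)) :=
    (quot Φ b (φ b) (hΦd b hb)).sub (quot Φ a (φ a) (hΦd a ha))
  have := tendsto_nhds_unique (hdc.congr (fun n => hFn n)) hlim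
  exact this

lemma g_diff (D g : ℝ → ℝ) (hD : IntegrableOn D (Set.Ioi 0))
    (hFTC : ∀ x : ℝ, 0 < x → g x = ∫ t in Set.Ioo (0:ℝ) x, D t)
    {a b : ℝ} (ha : 0 < a) (hab : a ≤ b) :
    ∫ t in Set.Ioc a b, D t = g b - g a := by
  have hb : (0:ℝ) < b := lt_of_lt_of_le ha hab
  rw [hFTC a ha, hFTC b hb]
  have hsplit : Set.Ioo (0:ℝ) b = Set.Ioo 0 a ∪ Set.Ico a b :=
    (Set.Ioo_union_Ico_eq_Ioo ha hab).symm
  have hdisj : Disjoint (Set.Ioo (0:ℝ) a) (Set.Ico a b) :=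
    (Set.Iio_disjoint_Ici (le_refl a)).mono Set.Ioo_subset_Iio_self Set.Ico_subset_Ici_self
  rw [hsplit, setIntegral_union hdisj measurableSet_Ico
    (hD.mono_set (fun t ht => ht.1)) (hD.mono_set (fun t ht => lt_of_lt_of_le ha ht.1))]
  rw [MeasureTheory.integral_Ico_eq_integral_Ioo, MeasureTheory.integral_Ioc_eq_integral_Ioo]
  ring

lemma phiD_loc (φ φD : ℝ → ℝ)
    (hφlip : ∀ K : Set ℝ, IsCompact K → K ⊆ Set.Ioi 0 →
      ∃ L : ℝ≥0, LipschitzOnWith L φ K)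
    (hd : ∀ᵐ x ∂(volume.restrict (Set.Ioi (0:ℝ))), HasDerivAt φ (φD x) x)
    {a b : ℝ} (ha : 0 < a) (hab : a ≤ b) :
    IntegrableOn φD (Set.Ioc a b) ∧
      ∃ C : ℝ, ∀ᵐ t ∂(volume.restrict (Set.Ioc a b)), ‖φD t‖ ≤ C := by
  have hKsub : Set.Icc a (b+1) ⊆ Set.Ioi 0 := fun y hy => lt_of_lt_of_le ha hy.1
  obtain ⟨L, hL⟩ := hφlip (Set.Icc a (b+1)) isCompact_Icc hKsub
  have hsub : Set.Ioc a b ⊆ Set.Ioi (0:ℝ) := fun t ht => lt_trans ha ht.1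
  have hdsub : ∀ᵐ t ∂(volume.restrict (Set.Ioc a b)), HasDerivAt φ (φD t) t :=
    ae_restrict_of_ae_restrict_of_subset hsub hd
  have hbound : ∀ᵐ t ∂(volume.restrict (Set.Ioc a b)), ‖φD t‖ ≤ (L:ℝ) := by
    filter_upwards [hdsub, ae_restrict_mem measurableSet_Ioc] with t hdt htmem
    exact hdt.le_of_lipschitzOn
      (Icc_mem_nhds (by exact htmem.1) (by linarith [htmem.2])) hL
  have haesm : AEStronglyMeasurable φD (volume.restrict (Set.Ioc a b)) := by
    refine (measurable_deriv φ).aestronglyMeasurable.congr ?_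
    filter_upwards [hdsub] with t ht using ht.deriv
  haveI : IsFiniteMeasure (volume.restrict (Set.Ioc a b)) :=
    ⟨by rw [Measure.restrict_apply_univ]; exact measure_Ioc_lt_top⟩
  exact ⟨⟨haesm, HasFiniteIntegral.of_bounded hbound⟩, ⟨L, hbound⟩⟩

lemma ibp_compact (τ U φ φD D : ℝ → ℝ)
    (hφlip : ∀ K : Set ℝ, IsCompact K → K ⊆ Set.Ioi 0 →
      ∃ L : ℝ≥0, LipschitzOnWith L φ K)
    (hdphi : ∀ᵐ x ∂(volume.restrict (Set.Ioi (0:ℝ))), HasDerivAt φ (φD x) x)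
    (hD : IntegrableOn D (Set.Ioi 0))
    (hFTC : ∀ x : ℝ, 0 < x → τ x * U x = ∫ t in Set.Ioo (0:ℝ) x, D t)
    (hτUcont : ContinuousOn (fun x => τ x * U x) (Set.Ici 0))
    {a b : ℝ} (ha : 0 < a) (hab : a ≤ b) :
    ∫ x in Set.Ioc a b, (φ x * D x + τ x * U x * φD x)
      = τ b * U b * φ b - τ a * U a * φ a := by
  have hb : (0:ℝ) < b := lt_of_lt_of_le ha hab
  set g : ℝ → ℝ := fun x => τ x * U x with hg
  set ν := volume.restrict (Set.Ioc a b) with hν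
  haveI : IsFiniteMeasure ν :=
    ⟨by rw [hν, Measure.restrict_apply_univ]; exact measure_Ioc_lt_top⟩
  have hcont := contOn_of_locLip φ hφlip
  have hsub : Set.Ioc a b ⊆ Set.Ioi (0:ℝ) := fun t ht => lt_trans ha ht.1
  obtain ⟨hφDint, C, hφDbd⟩ := phiD_loc φ φD hφlip hdphi ha hab
  have hDint : IntegrableOn D (Set.Ioc a b) := hD.mono_set hsub
  -- boundedness of φ and g on the interval
  obtain ⟨Cφ, hCφ⟩ := isCompact_Icc.exists_bound_of_continuousOn
    (hcont.mono (fun t (ht : t ∈ Set.Icc a b) => lt_of_lt_of_le ha ht.1))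
  have hφbd : ∀ᵐ t ∂ν, ‖φ t‖ ≤ Cφ := by
    filter_upwards [ae_restrict_mem measurableSet_Ioc] with t ht
    exact hCφ t ⟨le_of_lt ht.1, ht.2⟩
  obtain ⟨Cg, hCg⟩ := isCompact_Icc.exists_bound_of_continuousOn
    (hτUcont.mono (fun t (ht : t ∈ Set.Icc a b) => le_trans (le_of_lt ha) ht.1))
  have hgbd : ∀ᵐ t ∂ν, ‖g t‖ ≤ Cg := by
    filter_upwards [ae_restrict_mem measurableSet_Ioc] with t ht
    exact hCg t ⟨le_of_lt ht.1, ht.2⟩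
  have hφaesm : AEStronglyMeasurable φ ν :=
    (hcont.mono hsub).aestronglyMeasurable measurableSet_Ioc
  have hgaesm : AEStronglyMeasurable g ν :=
    (hτUcont.mono (fun t ht => show (0:ℝ) ≤ t from le_of_lt (show (0:ℝ) < t from hsub ht))).aestronglyMeasurable measurableSet_Ioc
  have hφDmul : IntegrableOn (fun x => φ x * D x) (Set.Ioc a b) :=
    Integrable.bdd_mul hDint hφaesm hφbd
  have hgφD : IntegrableOn (fun x => g x * φD x) (Set.Ioc a b) :=
    Integrable.bdd_mul hφDint hgaesm hgbd
  -- the double-integral function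
  set H : ℝ × ℝ → ℝ := fun p => if p.2 ≤ p.1 then D p.1 * φD p.2 else 0 with hH
  have hHind : H = Set.indicator {p : ℝ × ℝ | p.2 ≤ p.1} (fun p => D p.1 * φD p.2) := by
    funext p
    simp [hH, Set.indicator_apply, Set.mem_setOf_eq]
  have hHint : Integrable H (ν.prod ν) := by
    rw [hHind]
    exact (Integrable.mul_prod hDint hφDint).indicator (measurableSet_le measurable_snd measurable_fst)
  have inner1 : ∀ x ∈ Set.Ioc a b, (∫ t, H (x, t) ∂ν) = D x * (φ x - φ a) := by
    intro x hx
    have h1 : (fun t => H (x, t)) = Set.indicator (Set.Iic x) (fun t => D x * φD t) := by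
      funext t; simp [hH, Set.indicator_apply, Set.mem_Iic]
    rw [h1, integral_indicator measurableSet_Iic, hν,
      Measure.restrict_restrict measurableSet_Iic]
    have h2 : Set.Iic x ∩ Set.Ioc a b = Set.Ioc a x := by
      ext t; simp only [Set.mem_inter_iff, Set.mem_Iic, Set.mem_Ioc]
      constructor
      · rintro ⟨h3, h4, h5⟩; exact ⟨h4, h3⟩
      · rintro ⟨h3, h4⟩; exact ⟨h4, h3, le_trans h4 hx.2⟩
    rw [h2, MeasureTheory.integral_const_mul, lip_ftc φ φD hφlip hdphi ha (le_of_lt hx.1)]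
  have inner2 : ∀ t ∈ Set.Ioc a b, (∫ x, H (x, t) ∂ν) = φD t * (g b - g t) := by
    intro t ht
    have h1 : (fun x => H (x, t)) = Set.indicator (Set.Ici t) (fun x => D x * φD t) := by
      funext x; simp [hH, Set.indicator_apply, Set.mem_Ici]
    rw [h1, integral_indicator measurableSet_Ici, hν,
      Measure.restrict_restrict measurableSet_Ici]
    have h2 : Set.Ici t ∩ Set.Ioc a b = Set.Icc t b := by
      ext x; simp only [Set.mem_inter_iff, Set.mem_Ici, Set.mem_Ioc, Set.mem_Icc]
      constructor
      · rintro ⟨h3, h4, h5⟩; exact ⟨h3, h5⟩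
      · rintro ⟨h3, h4⟩; exact ⟨h3, lt_of_lt_of_le ht.1 h3, h4⟩
    rw [h2, MeasureTheory.integral_Icc_eq_integral_Ioc,
      MeasureTheory.integral_mul_const, g_diff D g hD hFTC (lt_trans ha ht.1) ht.2]
    ring
  -- compute the double integral both ways
  have way1 : (∫ p, H p ∂(ν.prod ν))
      = (∫ x in Set.Ioc a b, φ x * D x) - φ a * (g b - g a) := by
    rw [MeasureTheory.integral_prod _ hHint]
    have : (∫ x, (∫ t, H (x, t) ∂ν) ∂ν) = ∫ x in Set.Ioc a b, (φ x * D x - φ a * D x) := by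
      rw [hν]
      refine setIntegral_congr_fun measurableSet_Ioc (fun x hx => ?_)
      rw [inner1 x hx]; ring
    rw [this, MeasureTheory.integral_sub hφDmul (hDint.const_mul (φ a)),
      MeasureTheory.integral_const_mul, g_diff D g hD hFTC ha hab]
  have way2 : (∫ p, H p ∂(ν.prod ν))
      = g b * (φ b - φ a) - ∫ x in Set.Ioc a b, g x * φD x := by
    rw [MeasureTheory.integral_prod_symm _ hHint]
    have : (∫ t, (∫ x, H (x, t) ∂ν) ∂ν) = ∫ t in Set.Ioc a b, (g b * φD t - g t * φD t) := by
      rw [hν]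
      refine setIntegral_congr_fun measurableSet_Ioc (fun t ht => ?_)
      rw [inner2 t ht]; ring
    rw [this, MeasureTheory.integral_sub (hφDint.const_mul (g b)) hgφD,
      MeasureTheory.integral_const_mul, lip_ftc φ φD hφlip hdphi ha hab]
  rw [MeasureTheory.integral_add hφDmul hgφD]
  have := way1.symm.trans way2
  have hgab : g a = τ a * U a := rfl
  have hgbb : g b = τ b * U b := rfl
  rw [← hgab, ← hgbb]
  linarith [this]


/-- **Direct and dual eigenvalues coincide.** If `(λ₁,U)` is a classical solution
of the direct growth-fragmentation eigenequation (with `τU ∈ W^{1,1}(0,∞)`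
expressed through its integrable derivative `D`, vanishing at `0` and at `∞`) and
`(λ₂,φ)` solves the dual equation, then under the stated integrability
conditions, `∫Uφ > 0` implies `λ₁ = λ₂`. -/
theorem direct_dual_eigenvalues_coincide
    (τ β : ℝ → ℝ) (hτmeas : Measurable τ) (hτ0 : ∀ x : ℝ, 0 ≤ τ x)
    (hβmeas : Measurable β) (hβ0 : ∀ x : ℝ, 0 ≤ β x)
    (k : ℝ → ℝ → ℝ) (hkmeas : Measurable fun p : ℝ × ℝ => k p.1 p.2)
    (hk0 : ∀ x y : ℝ, 0 ≤ k x y) (hksupp : ∀ x y : ℝ, y < x → k x y = 0)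
    (hknorm : ∀ y : ℝ, 0 < y → ∫ x in Set.Ioo (0:ℝ) y, k x y = 1)
    (lam₁ lam₂ : ℝ) (U φ φD D : ℝ → ℝ)
    (hU0 : ∀ x : ℝ, 0 < x → 0 ≤ U x) (hUint : IntegrableOn U (Set.Ioi 0))
    (hβU : IntegrableOn (fun x => β x * U x) (Set.Ioi 0))
    (hτUcont : ContinuousOn (fun x => τ x * U x) (Set.Ici 0))
    (hτU0 : τ 0 * U 0 = 0)
    (hD : IntegrableOn D (Set.Ioi 0))
    (hFTC : ∀ x : ℝ, 0 < x → τ x * U x = ∫ t in Set.Ioo (0:ℝ) x, D t)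
    (hτUinf : Tendsto (fun x => τ x * U x) atTop (nhds 0))
    (hdirect : ∀ᵐ x ∂(volume.restrict (Set.Ioi (0:ℝ))),
      D x + (β x + lam₁) * U x = 2 * ∫ y in Set.Ioi x, β y * k x y * U y)
    (hφ0 : ∀ x : ℝ, 0 < x → 0 ≤ φ x)
    (hφlip : ∀ K : Set ℝ, IsCompact K → K ⊆ Set.Ioi 0 →
      ∃ L : ℝ≥0, LipschitzOnWith L φ K)
    (hdual : ∀ᵐ x ∂(volume.restrict (Set.Ioi (0:ℝ))),
      HasDerivAt φ (φD x) x ∧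
      -(τ x) * φD x + (β x + lam₂) * φ x
        = 2 * β x * ∫ z in Set.Ioo (0:ℝ) x, k z x * φ z)
    (hint1 : IntegrableOn (fun x => U x * φ x) (Set.Ioi 0))
    (hint2 : IntegrableOn (fun x => β x * U x * φ x) (Set.Ioi 0))
    (hint3 : IntegrableOn (fun x => τ x * U x * |φD x|) (Set.Ioi 0))
    (hint4 : IntegrableOn (fun p : ℝ × ℝ => β p.2 * k p.1 p.2 * U p.2 * φ p.1)
      (Set.Ioi 0 ×ˢ Set.Ioi 0))
    (hlim0 : Tendsto (fun x => τ x * U x * φ x) (nhdsWithin 0 (Set.Ioi 0)) (nhds 0))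
    (hliminf : Tendsto (fun x => τ x * U x * φ x) atTop (nhds 0))
    (hpos : 0 < ∫ x in Set.Ioi (0:ℝ), U x * φ x) :
    lam₁ = lam₂ := by
  have hdphi : ∀ᵐ x ∂(volume.restrict (Set.Ioi (0:ℝ))), HasDerivAt φ (φD x) x := by
    filter_upwards [hdual] with x hx using hx.1
  set μ : Measure ℝ := volume.restrict (Set.Ioi (0:ℝ)) with hμ
  set f : ℝ × ℝ → ℝ := fun p => β p.2 * k p.1 p.2 * U p.2 * φ p.1 with hfdef
  have hμprod : μ.prod μ = (volume : Measure (ℝ × ℝ)).restrict (Set.Ioi 0 ×ˢ Set.Ioi 0) := by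
    rw [hμ, Measure.prod_restrict]; rfl
  have hfint : Integrable f (μ.prod μ) := by
    rw [hμprod]; exact hint4
  -- a.e. strong measurability of φD
  have hφDaesm : AEStronglyMeasurable φD μ := by
    refine (measurable_deriv φ).aestronglyMeasurable.congr ?_
    filter_upwards [hdphi] with x hx using hx.deriv
  -- integrability of the various products
  have hUφa : Integrable (fun x => U x * φ x) μ := hint1
  have hβUφa : Integrable (fun x => β x * U x * φ x) μ := hint2
  have hUφlam : ∀ l : ℝ, Integrable (fun x => (β x + l) * (U x * φ x)) μ := by
    intro l
    have e : (fun x => (β x + l) * (U x * φ x))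
        = fun x => β x * U x * φ x + l * (U x * φ x) := funext fun x => by ring
    rw [e]; exact hβUφa.add (hUφa.const_mul l)
  have hgφDint : Integrable (fun x => τ x * U x * φD x) μ := by
    refine Integrable.mono' (show Integrable (fun x => τ x * U x * |φD x|) μ from hint3)
      (((hτmeas.aestronglyMeasurable).mul hUint.1).mul hφDaesm) ?_
    filter_upwards [ae_restrict_mem measurableSet_Ioi] with x hx
    rw [Real.norm_eq_abs, abs_mul, abs_of_nonneg (mul_nonneg (hτ0 x) (hU0 x hx))]
  -- === Step 1 : integrated direct equation ===
  have hkey1 : ∀ᵐ x ∂μ, φ x * D x + (β x + lam₁) * (U x * φ x)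
      = 2 * ∫ y, f (x, y) ∂μ := by
    filter_upwards [hdirect, hfint.prod_right_ae, ae_restrict_mem measurableSet_Ioi]
      with x hdx hix hx
    by_cases hφx : φ x = 0
    · have hz : (∫ y, f (x, y) ∂μ) = 0 := by
        have e : (fun y => f (x, y)) = fun _ => (0:ℝ) := by
          funext y; simp only [hfdef, hφx, mul_zero]
        rw [e, integral_zero]
      rw [hz, hφx]; ring
    · have hInt : Integrable (fun y => β y * k x y * U y) μ := by
        have h2 := hix.const_mul (φ x)⁻¹
        refine h2.congr (Eventually.of_forall fun y => ?_)
        show (φ x)⁻¹ * f (x, y) = β y * k x y * U y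
        rw [hfdef]; field_simp
      have hsplit : (∫ y, β y * k x y * U y ∂μ) = ∫ y in Set.Ioi x, β y * k x y * U y := by
        rw [hμ]
        have hun : Set.Ioc 0 x ∪ Set.Ioi x = Set.Ioi (0:ℝ) :=
          Set.Ioc_union_Ioi_eq_Ioi (le_of_lt hx)
        have hzero : (∫ y in Set.Ioc (0:ℝ) x, β y * k x y * U y) = 0 := by
          rw [MeasureTheory.integral_Ioc_eq_integral_Ioo]
          have heqon : Set.EqOn (fun y => β y * k x y * U y) (fun _ => (0:ℝ)) (Set.Ioo 0 x) :=
            fun y hy => by show β y * k x y * U y = 0; rw [hksupp x y hy.2]; ring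
          rw [setIntegral_congr_fun measurableSet_Ioo heqon, integral_zero]
        calc (∫ y in Set.Ioi (0:ℝ), β y * k x y * U y)
            = ∫ y in Set.Ioc 0 x ∪ Set.Ioi x, β y * k x y * U y := by rw [hun]
          _ = (∫ y in Set.Ioc (0:ℝ) x, β y * k x y * U y)
              + ∫ y in Set.Ioi x, β y * k x y * U y := by
              have hIntOn : IntegrableOn (fun y => β y * k x y * U y) (Set.Ioi 0) volume := hInt
              exact setIntegral_union Set.Ioc_disjoint_Ioi_same measurableSet_Ioi
                (hIntOn.mono_set (fun y hy => hy.1)) (hIntOn.mono_set (fun y hy => show (0:ℝ) < y from lt_trans (show (0:ℝ) < x from hx) (show x < y from hy)))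
          _ = ∫ y in Set.Ioi x, β y * k x y * U y := by rw [hzero, zero_add]
      have hf2 : (∫ y, f (x, y) ∂μ) = φ x * ∫ y in Set.Ioi x, β y * k x y * U y := by
        have e : (fun y => f (x, y)) = fun y => φ x * (β y * k x y * U y) := by
          funext y; rw [hfdef]; ring
        rw [e, MeasureTheory.integral_const_mul, hsplit]
      rw [hf2]
      linear_combination φ x * hdx
  have hPint : Integrable (fun x => ∫ y, f (x, y) ∂μ) μ := hfint.integral_prod_left
  have hDφint : Integrable (fun x => φ x * D x) μ := by
    have h2 : Integrable (fun x => 2 * (∫ y, f (x, y) ∂μ) - (β x + lam₁) * (U x * φ x)) μ :=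
      (hPint.const_mul 2).sub (hUφlam lam₁)
    refine h2.congr ?_
    filter_upwards [hkey1] with x hx
    linarith
  have eq1 : (∫ x, φ x * D x ∂μ)
      + ((∫ x, β x * U x * φ x ∂μ) + lam₁ * ∫ x, U x * φ x ∂μ)
      = 2 * ∫ p, f p ∂(μ.prod μ) := by
    have e : (∫ x, (φ x * D x + (β x + lam₁) * (U x * φ x)) ∂μ)
        = ∫ x, 2 * (∫ y, f (x, y) ∂μ) ∂μ :=
      integral_congr_ae (by filter_upwards [hkey1] with x hx; rw [hx])
    rw [MeasureTheory.integral_add hDφint (hUφlam lam₁), MeasureTheory.integral_const_mul] at e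
    have e2 : (∫ x, (β x + lam₁) * (U x * φ x) ∂μ)
        = (∫ x, β x * U x * φ x ∂μ) + lam₁ * ∫ x, U x * φ x ∂μ := by
      have e3 : (fun x => (β x + lam₁) * (U x * φ x))
          = fun x => β x * U x * φ x + lam₁ * (U x * φ x) := funext fun x => by ring
      rw [e3, MeasureTheory.integral_add hβUφa (hUφa.const_mul lam₁),
        MeasureTheory.integral_const_mul]
    rw [e2] at e
    rw [e, MeasureTheory.integral_prod _ hfint]
  -- === Step 2 : integrated dual equation ===
  have hkey2 : ∀ᵐ x ∂μ, -(τ x * U x * φD x) + (β x + lam₂) * (U x * φ x)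
      = 2 * ∫ z, f (z, x) ∂μ := by
    filter_upwards [hdual, hfint.prod_left_ae, ae_restrict_mem measurableSet_Ioi]
      with x hdx hix hx
    obtain ⟨-, heq⟩ := hdx
    have hrhs : (∫ z, f (z, x) ∂μ) = (β x * U x) * ∫ z, k z x * φ z ∂μ := by
      have e : (fun z => f (z, x)) = fun z => (β x * U x) * (k z x * φ z) := by
        funext z; rw [hfdef]; ring
      rw [e, MeasureTheory.integral_const_mul]
    by_cases hc : β x * U x = 0
    · rw [hrhs, hc]
      have h0 : β x * U x = 0 := hc
      -- multiply dual equation by U x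
      linear_combination U x * heq + (2 * ∫ z in Set.Ioo (0:ℝ) x, k z x * φ z) * hc
    · have hInt : Integrable (fun z => k z x * φ z) μ := by
        have h2 := hix.const_mul (β x * U x)⁻¹
        refine h2.congr (Eventually.of_forall fun z => ?_)
        show (β x * U x)⁻¹ * f (z, x) = k z x * φ z
        rw [inv_mul_eq_iff_eq_mul₀ hc, hfdef]; ring
      have hsplit : (∫ z, k z x * φ z ∂μ) = ∫ z in Set.Ioo (0:ℝ) x, k z x * φ z := by
        rw [hμ]
        have hun : Set.Ioo 0 x ∪ Set.Ici x = Set.Ioi (0:ℝ) := Set.Ioo_union_Ici_eq_Ioi hx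
        have hzero : (∫ z in Set.Ici x, k z x * φ z) = 0 := by
          rw [MeasureTheory.integral_Ici_eq_integral_Ioi]
          have heqon : Set.EqOn (fun z => k z x * φ z) (fun _ => (0:ℝ)) (Set.Ioi x) :=
            fun z hz => by show k z x * φ z = 0; rw [hksupp z x hz]; ring
          rw [setIntegral_congr_fun measurableSet_Ioi heqon, integral_zero]
        calc (∫ z in Set.Ioi (0:ℝ), k z x * φ z)
            = ∫ z in Set.Ioo 0 x ∪ Set.Ici x, k z x * φ z := by rw [hun]
          _ = (∫ z in Set.Ioo (0:ℝ) x, k z x * φ z) + ∫ z in Set.Ici x, k z x * φ z := by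
              have hIntOn : IntegrableOn (fun z => k z x * φ z) (Set.Ioi 0) volume := hInt
              refine setIntegral_union ?_ measurableSet_Ici
                (hIntOn.mono_set (fun z hz => hz.1))
                (hIntOn.mono_set (fun z hz => show (0:ℝ) < z from lt_of_lt_of_le (show (0:ℝ) < x from hx) (show x ≤ z from hz)))
              exact (Set.Iio_disjoint_Ici (le_refl x)).mono Set.Ioo_subset_Iio_self le_rfl
          _ = ∫ z in Set.Ioo (0:ℝ) x, k z x * φ z := by rw [hzero, add_zero]
      rw [hrhs, hsplit]
      linear_combination U x * heq
  have hQint : Integrable (fun x => ∫ z, f (z, x) ∂μ) μ := hfint.integral_prod_right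
  have eq2 : -(∫ x, τ x * U x * φD x ∂μ)
      + ((∫ x, β x * U x * φ x ∂μ) + lam₂ * ∫ x, U x * φ x ∂μ)
      = 2 * ∫ p, f p ∂(μ.prod μ) := by
    have e : (∫ x, (-(τ x * U x * φD x) + (β x + lam₂) * (U x * φ x)) ∂μ)
        = ∫ x, 2 * (∫ z, f (z, x) ∂μ) ∂μ :=
      integral_congr_ae (by filter_upwards [hkey2] with x hx; rw [hx])
    rw [MeasureTheory.integral_add
        (show Integrable (fun x => -(τ x * U x * φD x)) μ from hgφDint.neg)
        (hUφlam lam₂), MeasureTheory.integral_const_mul,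
      MeasureTheory.integral_neg] at e
    have e2 : (∫ x, (β x + lam₂) * (U x * φ x) ∂μ)
        = (∫ x, β x * U x * φ x ∂μ) + lam₂ * ∫ x, U x * φ x ∂μ := by
      have e3 : (fun x => (β x + lam₂) * (U x * φ x))
          = fun x => β x * U x * φ x + lam₂ * (U x * φ x) := funext fun x => by ring
      rw [e3, MeasureTheory.integral_add hβUφa (hUφa.const_mul lam₂),
        MeasureTheory.integral_const_mul]
    rw [e2] at e
    rw [e, MeasureTheory.integral_prod_symm _ hfint]
  -- === Step 3 : integration by parts on (0,∞) ===
  have eq3 : (∫ x, (φ x * D x + τ x * U x * φD x) ∂μ) = 0 := by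
    set s : ℕ → Set ℝ := fun n => Set.Ioc (1/(n+1) : ℝ) (n+1) with hs
    have hapos : ∀ n : ℕ, (0:ℝ) < 1/(n+1) := fun n => by positivity
    have hale : ∀ n : ℕ, (1/(n+1) : ℝ) ≤ (n+1 : ℝ) := fun n => by
      rw [div_le_iff₀ (by positivity)]
      nlinarith [Nat.cast_nonneg (α := ℝ) n]
    have hmono : Monotone s := by
      intro m n hmn
      apply Set.Ioc_subset_Ioc
      · apply one_div_le_one_div_of_le (by positivity)
        exact_mod_cast Nat.add_le_add_right hmn 1
      · exact_mod_cast Nat.add_le_add_right hmn 1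
    have hunion : (⋃ n, s n) = Set.Ioi (0:ℝ) := by
      apply Set.eq_of_subset_of_subset
      · refine Set.iUnion_subset fun n => ?_
        intro x hx; exact lt_trans (hapos n) hx.1
      · intro x hx
        obtain ⟨n, hn⟩ := exists_nat_ge (max (1/x) x)
        refine Set.mem_iUnion.mpr ⟨n, ?_, ?_⟩
        · rw [div_lt_iff₀ (by positivity)]
          have h1 : 1/x ≤ (n:ℝ) := le_trans (le_max_left _ _) hn
          have h2 : 1/x < (n:ℝ)+1 := by linarith
          rw [div_lt_iff₀ hx] at h2
          linarith [mul_comm x ((n:ℝ)+1)]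
        · have := le_trans (le_max_right (1/x) x) hn
          linarith
    have hFint : Integrable (fun x => φ x * D x + τ x * U x * φD x) μ := hDφint.add hgφDint
    have htend1 : Tendsto (fun n => ∫ x in s n, (φ x * D x + τ x * U x * φD x)) atTop
        (𝓝 (∫ x, (φ x * D x + τ x * U x * φD x) ∂μ)) := by
      have := tendsto_setIntegral_of_monotone (μ := volume)
        (f := fun x => φ x * D x + τ x * U x * φD x)
        (fun n => measurableSet_Ioc) hmono (by rw [hunion]; exact hFint)
      rwa [hunion] at this
    have htend2 : Tendsto (fun n => ∫ x in s n, (φ x * D x + τ x * U x * φD x)) atTop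
        (𝓝 (0 - 0)) := by
      have hval : ∀ n : ℕ, (∫ x in s n, (φ x * D x + τ x * U x * φD x))
          = τ ((n:ℝ)+1) * U ((n:ℝ)+1) * φ ((n:ℝ)+1)
            - τ (1/((n:ℝ)+1)) * U (1/((n:ℝ)+1)) * φ (1/((n:ℝ)+1)) := fun n =>
        ibp_compact τ U φ φD D hφlip hdphi hD hFTC hτUcont (hapos n) (hale n)
      rw [funext hval]  -- replace sequence
      refine Tendsto.sub ?_ ?_
      · exact hliminf.comp (tendsto_atTop_add_const_right _ 1 tendsto_natCast_atTop_atTop)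
      · refine hlim0.comp ?_
        refine tendsto_nhdsWithin_of_tendsto_nhds_of_eventually_within _
          tendsto_one_div_add_atTop_nhds_zero_nat ?_
        exact Eventually.of_forall fun n => hapos n
    have := tendsto_nhds_unique htend1 htend2
    rw [this]; ring
  -- === Combine ===
  rw [MeasureTheory.integral_add hDφint hgφDint] at eq3
  have hE : (0:ℝ) < ∫ x, U x * φ x ∂μ := hpos
  have hfinal : (lam₁ - lam₂) * (∫ x, U x * φ x ∂μ) = 0 := by linarith
  rcases mul_eq_zero.mp hfinal with h | h
  · linarith
  · exfalso; rw [h] at hE; exact lt_irrefl 0 hE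
end
end

section
/- (Explicit eigenelements for constant growth and linear fragmentation.) Let τ₀, β₀ > 0, and set λ = √(β₀τ₀) and X = X(x) = √(β₀/τ₀)·x. Define U(x) = 2√(β₀/τ₀)·(X + X²/2)·e^{−X−X²/2} and φ(x) = (1+X)/2 for x ≥ 0. Then: ∫₀^∞ U(x)dx = 1; U(0) = 0; for every x > 0, τ₀U'(x) + (β₀x + λ)U(x) = 2β₀∫_x^∞ U(y)dy; for every x > 0, −τ₀φ'(x) + (β₀x + λ)φ(x) = 2β₀∫₀ˣ φ(y)dy; and ∫₀^∞ φ(x)U(x)dx = 1. -/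
open MeasureTheory Set Filter Topology
open scoped ENNReal NNReal

noncomputable section

namespace GFaux

def E (c x : ℝ) : ℝ := Real.exp (-(c*x) - (c*x)^2/2)
def Uc (c x : ℝ) : ℝ := 2*c*(c*x + (c*x)^2/2) * E c x
def F (c x : ℝ) : ℝ := (1 + c*x) * E c x
def G (c x : ℝ) : ℝ := ((1 + c*x)^2 + 1)/2 * E c x

lemma hasDerivAt_E (c x : ℝ) :
    HasDerivAt (fun y => E c y) ((-c - c^2*x) * E c x) x := by
  rw [mul_comm]
  have h1 : HasDerivAt (fun y : ℝ => c*y) c x := by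
    simpa using (hasDerivAt_id x).const_mul c
  have h2 : HasDerivAt (fun y : ℝ => -(c*y) - (c*y)^2/2) (-c - c^2*x) x := by
    have := (h1.neg).sub ((h1.pow 2).div_const 2)
    refine HasDerivAt.congr_deriv this ?_
    ring
  simpa [E] using h2.exp

lemma hasDerivAt_F (c x : ℝ) :
    HasDerivAt (fun y => F c y) (-(Uc c x)) x := by
  have h1 : HasDerivAt (fun y : ℝ => 1 + c*y) c x := by
    simpa using ((hasDerivAt_id x).const_mul c).const_add 1
  have := h1.mul (hasDerivAt_E c x)
  refine HasDerivAt.congr_deriv this ?_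
  simp only [F, Uc, E]
  ring

lemma hasDerivAt_U (c x : ℝ) :
    HasDerivAt (fun y => Uc c y)
      (2*c^2*(1 + c*x)*(1 - c*x - (c*x)^2/2) * E c x) x := by
  have h1 : HasDerivAt (fun y : ℝ => c*y) c x := by
    simpa using (hasDerivAt_id x).const_mul c
  have hp : HasDerivAt (fun y : ℝ => 2*c*(c*y + (c*y)^2/2)) (2*c*(c + c^2*x)) x := by
    have := (h1.add ((h1.pow 2).div_const 2)).const_mul (2*c)
    refine HasDerivAt.congr_deriv this ?_
    ring
  have := hp.mul (hasDerivAt_E c x)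
  refine HasDerivAt.congr_deriv this ?_
  simp only [Uc, E]
  ring

lemma hasDerivAt_G (c x : ℝ) :
    HasDerivAt (fun y => G c y) (-((1 + c*x)/2 * Uc c x)) x := by
  have h1 : HasDerivAt (fun y : ℝ => c*y) c x := by
    simpa using (hasDerivAt_id x).const_mul c
  have hp : HasDerivAt (fun y : ℝ => ((1 + c*y)^2 + 1)/2) (c*(1 + c*x)) x := by
    have h2 : HasDerivAt (fun y : ℝ => 1 + c*y) c x := by
      simpa using h1.const_add 1
    have := ((h2.pow 2).add_const 1).div_const 2
    refine HasDerivAt.congr_deriv this ?_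
    ring
  have := hp.mul (hasDerivAt_E c x)
  refine HasDerivAt.congr_deriv this ?_
  simp only [G, Uc, E]
  ring

lemma tendsto_poly (p q r : ℝ) :
    Tendsto (fun t : ℝ => (p + q*t + r*t^2) * Real.exp (-t)) atTop (𝓝 0) := by
  have h0 : Tendsto (fun t : ℝ => p * Real.exp (-t)) atTop (𝓝 0) := by
    simpa using Real.tendsto_exp_neg_atTop_nhds_zero.const_mul p
  have h1 : Tendsto (fun t : ℝ => q * (t^1 * Real.exp (-t))) atTop (𝓝 0) := by
    simpa using (Real.tendsto_pow_mul_exp_neg_atTop_nhds_zero 1).const_mul q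
  have h2 : Tendsto (fun t : ℝ => r * (t^2 * Real.exp (-t))) atTop (𝓝 0) := by
    simpa using (Real.tendsto_pow_mul_exp_neg_atTop_nhds_zero 2).const_mul r
  have := (h0.add h1).add h2
  simp only [add_zero] at this
  refine this.congr fun t => ?_
  ring

lemma tendsto_aux (c p q r : ℝ) (hc : 0 < c) (hp : 0 ≤ p) (hq : 0 ≤ q) (hr : 0 ≤ r) :
    Tendsto (fun x => (p + q*(c*x) + r*(c*x)^2) * E c x) atTop (𝓝 0) := by
  have hcomp : Tendsto (fun x : ℝ => c*x) atTop atTop :=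
    Tendsto.const_mul_atTop hc tendsto_id
  have hup := (tendsto_poly p q r).comp hcomp
  refine tendsto_of_tendsto_of_tendsto_of_le_of_le' tendsto_const_nhds hup ?_ ?_
  · filter_upwards [eventually_ge_atTop (0:ℝ)] with x hx
    have hcx : 0 ≤ c*x := mul_nonneg hc.le hx
    have hpoly : 0 ≤ p + q*(c*x) + r*(c*x)^2 := by
      have := mul_nonneg hq hcx
      have := mul_nonneg hr (sq_nonneg (c*x))
      nlinarith
    exact mul_nonneg hpoly (Real.exp_pos _).le
  · filter_upwards [eventually_ge_atTop (0:ℝ)] with x hx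
    have hcx : 0 ≤ c*x := mul_nonneg hc.le hx
    have hpoly : 0 ≤ p + q*(c*x) + r*(c*x)^2 := by
      have := mul_nonneg hq hcx
      have := mul_nonneg hr (sq_nonneg (c*x))
      nlinarith
    have hexp : E c x ≤ Real.exp (-(c*x)) := by
      simp only [E]
      exact Real.exp_le_exp.2 (by nlinarith [sq_nonneg (c*x)])
    calc (p + q*(c*x) + r*(c*x)^2) * E c x
        ≤ (p + q*(c*x) + r*(c*x)^2) * Real.exp (-(c*x)) :=
          mul_le_mul_of_nonneg_left hexp hpoly
      _ = ((fun t : ℝ => (p + q*t + r*t^2) * Real.exp (-t)) ∘ (fun x => c*x)) x := rfl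

lemma tendsto_F (c : ℝ) (hc : 0 < c) : Tendsto (fun x => F c x) atTop (𝓝 0) := by
  refine (tendsto_aux c 1 1 0 hc (by norm_num) (by norm_num) le_rfl).congr fun x => ?_
  simp only [F]
  ring

lemma tendsto_G (c : ℝ) (hc : 0 < c) : Tendsto (fun x => G c x) atTop (𝓝 0) := by
  refine (tendsto_aux c 1 1 (1/2) hc (by norm_num) (by norm_num) (by norm_num)).congr
    fun x => ?_
  simp only [G]
  ring

lemma U_nonneg (c : ℝ) (hc : 0 < c) {x : ℝ} (hx : 0 ≤ x) : 0 ≤ Uc c x := by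
  have hcx : 0 ≤ c*x := mul_nonneg hc.le hx
  have := (Real.exp_pos (-(c*x) - (c*x)^2/2)).le
  have h : 0 ≤ c*x + (c*x)^2/2 := add_nonneg hcx (by positivity)
  simp only [Uc, E]
  have h2 : (0:ℝ) ≤ 2*c := by linarith
  exact mul_nonneg (mul_nonneg h2 h) this

lemma integral_U (c : ℝ) (hc : 0 < c) (a : ℝ) (ha : 0 ≤ a) :
    ∫ x in Ioi a, Uc c x = F c a := by
  have hderiv : ∀ x ∈ Ici a, HasDerivAt (fun y => -(F c y)) (Uc c x) x := by
    intro x _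
    exact (hasDerivAt_F c x).neg.congr_deriv (neg_neg _)
  have hpos : ∀ x ∈ Ioi a, 0 ≤ Uc c x := fun x hx =>
    U_nonneg c hc (le_trans ha (le_of_lt hx))
  have htend : Tendsto (fun y => -(F c y)) atTop (𝓝 (0:ℝ)) := by
    simpa using (tendsto_F c hc).neg
  have := integral_Ioi_of_hasDerivAt_of_nonneg' hderiv hpos htend
  simpa using this

lemma integral_phiU (c : ℝ) (hc : 0 < c) :
    ∫ x in Ioi (0:ℝ), (1 + c*x)/2 * Uc c x = 1 := by
  have hderiv : ∀ x ∈ Ici (0:ℝ), HasDerivAt (fun y => -(G c y)) ((1 + c*x)/2 * Uc c x) x := by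
    intro x _
    exact (hasDerivAt_G c x).neg.congr_deriv (neg_neg _)
  have hpos : ∀ x ∈ Ioi (0:ℝ), 0 ≤ (1 + c*x)/2 * Uc c x := by
    intro x hx
    have hx0 : (0:ℝ) ≤ x := le_of_lt hx
    have hcx : 0 ≤ c*x := mul_nonneg hc.le hx0
    exact mul_nonneg (by linarith) (U_nonneg c hc hx0)
  have htend : Tendsto (fun y => -(G c y)) atTop (𝓝 (0:ℝ)) := by
    simpa using (tendsto_G c hc).neg
  have := integral_Ioi_of_hasDerivAt_of_nonneg' hderiv hpos htend
  have hG0 : G c 0 = 1 := by simp [G, E]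
  rw [this, hG0]
  ring

end GFaux

/-- **Explicit eigenelements for constant growth `τ ≡ τ₀` and linear
fragmentation `β(x) = β₀x`** with uniform fragmentation kernel:
`λ = √(β₀τ₀)`, `U(x) = 2√(β₀/τ₀)(X + X²/2)e^{-X-X²/2}` and `φ(x) = (1+X)/2`
with `X = √(β₀/τ₀)x` solve the direct and dual eigenequations, with the stated
normalisations. -/
theorem explicit_eigenelements_constant_growth
    (τ₀ β₀ lam : ℝ) (hτ₀ : 0 < τ₀) (hβ₀ : 0 < β₀)
    (hlam : lam = Real.sqrt (β₀ * τ₀))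
    (X : ℝ → ℝ) (hX : ∀ x : ℝ, X x = Real.sqrt (β₀ / τ₀) * x)
    (U φ : ℝ → ℝ)
    (hU : ∀ x : ℝ, U x = 2 * Real.sqrt (β₀ / τ₀) * (X x + (X x) ^ 2 / 2) *
      Real.exp (-(X x) - (X x) ^ 2 / 2))
    (hφ : ∀ x : ℝ, φ x = (1 + X x) / 2) :
    (∫ x in Set.Ioi (0:ℝ), U x = 1) ∧
    U 0 = 0 ∧
    (∀ x : ℝ, 0 < x →
      τ₀ * deriv U x + (β₀ * x + lam) * U x = 2 * β₀ * ∫ y in Set.Ioi x, U y) ∧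
    (∀ x : ℝ, 0 < x →
      -τ₀ * deriv φ x + (β₀ * x + lam) * φ x = 2 * β₀ * ∫ y in Set.Ioo 0 x, φ y) ∧
    (∫ x in Set.Ioi (0:ℝ), φ x * U x = 1) := by
  set c : ℝ := Real.sqrt (β₀ / τ₀) with hc_def
  have hdivpos : 0 < β₀ / τ₀ := div_pos hβ₀ hτ₀
  have hc : 0 < c := Real.sqrt_pos.2 hdivpos
  have hc2 : c ^ 2 = β₀ / τ₀ := Real.sq_sqrt hdivpos.le
  have hcb : τ₀ * c ^ 2 = β₀ := by
    rw [hc2]; field_simp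
  have hlam' : lam = τ₀ * c := by
    rw [hlam, show β₀ * τ₀ = τ₀ ^ 2 * (β₀ / τ₀) by field_simp,
      Real.sqrt_mul (sq_nonneg τ₀), Real.sqrt_sq hτ₀.le]
  have hU' : U = fun x => GFaux.Uc c x := by
    funext x
    simp only [hU, hX, GFaux.Uc, GFaux.E]
  have hφ' : φ = fun x => (1 + c * x) / 2 := by
    funext x
    simp only [hφ, hX]
  refine ⟨?_, ?_, ?_, ?_, ?_⟩
  · rw [hU', GFaux.integral_U c hc 0 le_rfl]
    simp [GFaux.F, GFaux.E]
  · rw [hU]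
    simp [hX]
  · intro x hx
    have hd : deriv U x = 2*c^2*(1 + c*x)*(1 - c*x - (c*x)^2/2) * GFaux.E c x := by
      rw [hU']
      exact (GFaux.hasDerivAt_U c x).deriv
    rw [hd, hU', GFaux.integral_U c hc x hx.le, hlam', ← hcb]
    simp only [GFaux.Uc, GFaux.F, GFaux.E]
    ring
  · intro x hx
    have hd : deriv φ x = c / 2 := by
      rw [hφ']
      have h1 : HasDerivAt (fun y : ℝ => (1 + c * y) / 2) (c / 2) x := by
        have : HasDerivAt (fun y : ℝ => 1 + c * y) c x := by
          simpa using ((hasDerivAt_id x).const_mul c).const_add 1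
        simpa using this.div_const 2
      exact h1.deriv
    have hint : ∫ y in Set.Ioo (0:ℝ) x, φ y = (x + c * x ^ 2 / 2) / 2 := by
      rw [hφ', ← MeasureTheory.integral_Ioc_eq_integral_Ioo,
        ← intervalIntegral.integral_of_le hx.le]
      have : ∀ y ∈ Set.uIcc (0:ℝ) x,
          HasDerivAt (fun y : ℝ => (y + c * y ^ 2 / 2) / 2) ((1 + c * y) / 2) y := by
        intro y _
        have h1 : HasDerivAt (fun y : ℝ => y + c * y ^ 2 / 2) (1 + c * y) y := by
          have hy : HasDerivAt (fun y : ℝ => y) 1 y := hasDerivAt_id y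
          have := hy.add (((hy.pow 2).const_mul c).div_const 2)
          refine HasDerivAt.congr_deriv this ?_
          ring
        simpa using h1.div_const 2
      rw [intervalIntegral.integral_eq_sub_of_hasDerivAt this
        (by apply Continuous.intervalIntegrable; continuity)]
      ring
    rw [hd, hint, hφ', hlam', ← hcb]
    ring
  · have : (fun x => φ x * U x) = fun x => (1 + c * x) / 2 * GFaux.Uc c x := by
      funext x
      rw [hφ', hU']
    rw [show (∫ x in Set.Ioi (0:ℝ), φ x * U x)
        = ∫ x in Set.Ioi (0:ℝ), (1 + c * x) / 2 * GFaux.Uc c x by rw [← this]]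
    exact GFaux.integral_phiU c hc
end
end

section
/- (Explicit eigenelements for linear growth and power-law fragmentation.) Let τ₀, β₀ > 0, let n ≥ 1 be an integer, and set a = β₀/(nτ₀), λ = τ₀, U(x) = a^{1/n}·(n/Γ(1/n))·e^{−a xⁿ} and φ(x) = a^{1/n}·(Γ(1/n)/Γ(2/n))·x for x ≥ 0. Then: ∫₀^∞ U(x)dx = 1; for every x > 0, (d/dx)(τ₀·x·U(x)) + (β₀xⁿ + λ)U(x) = 2∫_x^∞ β₀yⁿ·(1/y)·U(y)dy; for every x > 0, −τ₀xφ'(x) + (β₀xⁿ + λ)φ(x) = 2β₀xⁿ·(1/x)·∫₀ˣ φ(y)dy; and ∫₀^∞ φ(x)U(x)dx = 1. -/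
open MeasureTheory Set Filter
open scoped ENNReal NNReal

noncomputable section

/-- **Explicit eigenelements for linear growth `τ(x) = τ₀x` and power-law
fragmentation `β(x) = β₀xⁿ`** with uniform fragmentation kernel:
with `a = β₀/(nτ₀)`, the triple `λ = τ₀`,
`U(x) = a^{1/n}(n/Γ(1/n))e^{-axⁿ}`, `φ(x) = a^{1/n}(Γ(1/n)/Γ(2/n))x` solves the
direct and dual eigenequations, with the stated normalisations. -/
theorem explicit_eigenelements_linear_growth
    (τ₀ β₀ : ℝ) (hτ₀ : 0 < τ₀) (hβ₀ : 0 < β₀)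
    (n : ℕ) (hn : 1 ≤ n)
    (a lam : ℝ) (ha : a = β₀ / (n * τ₀)) (hlam : lam = τ₀)
    (U φ : ℝ → ℝ)
    (hU : ∀ x : ℝ, U x = a ^ ((1:ℝ) / n) * (n / Real.Gamma (1 / n)) *
      Real.exp (-(a * x ^ n)))
    (hφ : ∀ x : ℝ, φ x = a ^ ((1:ℝ) / n) *
      (Real.Gamma (1 / n) / Real.Gamma (2 / n)) * x) :
    (∫ x in Set.Ioi (0:ℝ), U x = 1) ∧
    (∀ x : ℝ, 0 < x →
      deriv (fun t => τ₀ * t * U t) x + (β₀ * x ^ n + lam) * U x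
        = 2 * ∫ y in Set.Ioi x, β₀ * y ^ n * (1 / y) * U y) ∧
    (∀ x : ℝ, 0 < x →
      -(τ₀ * x) * deriv φ x + (β₀ * x ^ n + lam) * φ x
        = 2 * β₀ * x ^ n * (1 / x) * ∫ y in Set.Ioo (0:ℝ) x, φ y) ∧
    (∫ x in Set.Ioi (0:ℝ), φ x * U x = 1) := by
  have hUf : U = fun x : ℝ => a ^ ((1:ℝ) / n) * (n / Real.Gamma (1 / n)) *
      Real.exp (-(a * x ^ n)) := funext hU
  have hφf : φ = fun x : ℝ => a ^ ((1:ℝ) / n) *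
      (Real.Gamma (1 / n) / Real.Gamma (2 / n)) * x := funext hφ
  have hnpos : 0 < (n:ℝ) := by exact_mod_cast Nat.lt_of_lt_of_le Nat.zero_lt_one hn
  have hnne : (n:ℝ) ≠ 0 := ne_of_gt hnpos
  have hapos : 0 < a := by rw [ha]; positivity
  have hΓ1 : 0 < Real.Gamma (1 / n) := Real.Gamma_pos_of_pos (by positivity)
  have hΓ2 : 0 < Real.Gamma (2 / n) := Real.Gamma_pos_of_pos (by positivity)
  have hβa : β₀ = a * n * τ₀ := by
    rw [ha]; field_simp
  -- auxiliary: derivative of exp(-(a tⁿ))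
  have hder : ∀ t : ℝ, HasDerivAt (fun s : ℝ => Real.exp (-(a * s ^ n)))
      (-(a * (n * t ^ (n-1))) * Real.exp (-(a * t ^ n))) t := by
    intro t
    have h1 : HasDerivAt (fun s : ℝ => -(a * s ^ n)) (-(a * (n * t ^ (n-1)))) t := by
      exact (((hasDerivAt_pow n t).const_mul a).neg)
    simpa [mul_comm] using h1.exp
  obtain ⟨m, rfl⟩ : ∃ m, n = m + 1 := ⟨n - 1, by omega⟩
  set C : ℝ := a ^ ((1:ℝ) / (m+1:ℕ)) * ((m+1:ℕ) / Real.Gamma (1 / (m+1:ℕ))) with hC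
  have hCpos : 0 < C := by rw [hC]; positivity
  have hApos : 0 < a ^ ((1:ℝ) / (m+1:ℕ)) := Real.rpow_pos_of_pos hapos _
  -- limit at infinity
  have hlim : Tendsto (fun t : ℝ => Real.exp (-(a * t ^ (m+1)))) atTop (nhds 0) := by
    apply Real.tendsto_exp_atBot.comp
    apply Filter.tendsto_neg_atBot_iff.mpr
    exact (tendsto_pow_atTop (by omega)).const_mul_atTop hapos
  refine ⟨?_, ?_, ?_, ?_⟩
  · -- normalisation of U
    rw [hUf]
    rw [MeasureTheory.integral_const_mul]
    have key : ∫ x in Set.Ioi (0:ℝ), Real.exp (-(a * x ^ (m+1))) =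
        a ^ (-((1:ℝ)/((m+1:ℕ):ℝ))) * (1/((m+1:ℕ):ℝ)) * Real.Gamma (1/((m+1:ℕ):ℝ)) := by
      have h := integral_rpow_mul_exp_neg_mul_rpow (p := ((m+1:ℕ):ℝ)) (q := 0) (b := a)
        hnpos (by norm_num) hapos
      rw [show (-((0:ℝ)+1))/((m+1:ℕ):ℝ) = -((1:ℝ)/((m+1:ℕ):ℝ)) by ring,
        show ((0:ℝ)+1)/((m+1:ℕ):ℝ) = 1/((m+1:ℕ):ℝ) by ring] at h
      rw [← h]
      refine setIntegral_congr_fun measurableSet_Ioi (fun x hx => ?_)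
      rw [Real.rpow_zero, one_mul, Real.rpow_natCast, neg_mul]
    rw [key, hC, Real.rpow_neg hapos.le]
    field_simp
  · -- direct eigenequation
    intro x hx
    have hG : HasDerivAt (fun t => τ₀ * t * U t)
        (τ₀ * (C * Real.exp (-(a * x ^ (m+1)))) +
          τ₀ * x * (C * (-(a * ((m+1:ℕ) * x ^ m)) * Real.exp (-(a * x ^ (m+1)))))) x := by
      rw [hUf]
      have h1 : HasDerivAt (fun t : ℝ => τ₀ * t) τ₀ x := by
        simpa using (hasDerivAt_id x).const_mul τ₀
      have h2 : HasDerivAt (fun t : ℝ => C * Real.exp (-(a * t ^ (m+1))))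
          (C * (-(a * ((m+1:ℕ) * x ^ m)) * Real.exp (-(a * x ^ (m+1))))) x := by
        simpa using ((hder x).const_mul C)
      simpa [hC, mul_comm, mul_assoc] using h1.fun_mul h2
    rw [hG.deriv]
    have hint : ∫ y in Set.Ioi x, β₀ * y ^ (m+1) * (1 / y) * U y = τ₀ * U x := by
      have hFd : ∀ y ∈ Set.Ici x, HasDerivAt
          (fun t => -(τ₀ * (C * Real.exp (-(a * t ^ (m+1))))))
          (β₀ * C * (y ^ m * Real.exp (-(a * y ^ (m+1))))) y := by
        intro y _
        have h := (((hder y).const_mul C).const_mul τ₀).fun_neg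
        refine h.congr_deriv ?_
        rw [hβa]; push_cast; ring
      have hpos : ∀ y ∈ Set.Ioi x, 0 ≤ β₀ * C * (y ^ m * Real.exp (-(a * y ^ (m+1)))) := by
        intro y hy
        have hy0 : (0:ℝ) < y := lt_trans hx hy
        positivity
      have hlim' : Tendsto (fun t : ℝ => -(τ₀ * (C * Real.exp (-(a * t ^ (m+1))))))
          atTop (nhds 0) := by
        have := ((hlim.const_mul C).const_mul τ₀).neg
        simpa using this
      have key := integral_Ioi_of_hasDerivAt_of_nonneg' hFd hpos hlim'
      rw [show (0:ℝ) - (-(τ₀ * (C * Real.exp (-(a * x ^ (m+1)))))) = τ₀ * U x by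
        rw [hU x]; ring] at key
      rw [← key]
      refine setIntegral_congr_fun measurableSet_Ioi (fun y hy => ?_)
      have hy0 : (0:ℝ) < y := lt_trans hx hy
      rw [hU y]
      field_simp
      ring
    rw [hint, hU x, hlam, hβa]
    push_cast
    ring
  · -- dual eigenequation
    intro x hx
    set c : ℝ := a ^ ((1:ℝ) / (m+1:ℕ)) *
      (Real.Gamma (1 / (m+1:ℕ)) / Real.Gamma (2 / (m+1:ℕ))) with hc
    have hd : HasDerivAt φ c x := by
      rw [hφf]
      simpa using (hasDerivAt_id x).const_mul c
    have hintφ : ∫ y in Set.Ioo (0:ℝ) x, φ y = c * (x ^ 2 / 2) := by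
      rw [hφf, ← MeasureTheory.integral_Ioc_eq_integral_Ioo,
        ← intervalIntegral.integral_of_le hx.le]
      rw [intervalIntegral.integral_const_mul, integral_id]
      ring
    rw [hd.deriv, hintφ, hφ x, hlam]
    field_simp
    ring
  · -- normalisation of φ U
    rw [hφf, hUf]
    have hcong : ∀ x ∈ Set.Ioi (0:ℝ),
        (a ^ ((1:ℝ) / (m+1:ℕ)) * (Real.Gamma (1 / (m+1:ℕ)) / Real.Gamma (2 / (m+1:ℕ))) * x) *
        (a ^ ((1:ℝ) / (m+1:ℕ)) * ((m+1:ℕ) / Real.Gamma (1 / (m+1:ℕ))) *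
          Real.exp (-(a * x ^ (m+1))))
        = (a ^ ((1:ℝ) / (m+1:ℕ)) * a ^ ((1:ℝ) / (m+1:ℕ)) *
            ((m+1:ℕ) / Real.Gamma (2 / (m+1:ℕ)))) *
          (x ^ ((1:ℝ)) * Real.exp (-a * x ^ ((m+1:ℕ):ℝ))) := by
      intro x hx
      rw [Real.rpow_one, Real.rpow_natCast, neg_mul]
      have h1 : Real.Gamma (1 / (m+1:ℕ)) ≠ 0 := ne_of_gt hΓ1
      field_simp
    rw [setIntegral_congr_fun measurableSet_Ioi hcong, MeasureTheory.integral_const_mul,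
      integral_rpow_mul_exp_neg_mul_rpow hnpos (by norm_num) hapos]
    have hsum : a ^ ((1:ℝ) / (m+1:ℕ)) * a ^ ((1:ℝ) / (m+1:ℕ)) *
        a ^ (-((1:ℝ)+1)/((m+1:ℕ):ℝ)) = 1 := by
      rw [mul_assoc, ← Real.rpow_add hapos, ← Real.rpow_add hapos,
        show (1:ℝ)/((m+1:ℕ):ℝ) + ((1:ℝ)/((m+1:ℕ):ℝ) + -((1:ℝ)+1)/((m+1:ℕ):ℝ)) = 0 by ring,
        Real.rpow_zero]
    have h11 : ((1:ℝ)+1)/((m+1:ℕ):ℝ) = 2/((m+1:ℕ):ℝ) := by norm_num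
    calc a ^ ((1:ℝ) / (m+1:ℕ)) * a ^ ((1:ℝ) / (m+1:ℕ)) *
          ((m+1:ℕ) / Real.Gamma (2 / (m+1:ℕ))) *
          (a ^ (-(1 + 1) / ((m+1:ℕ):ℝ)) * (1 / ((m+1:ℕ):ℝ)) *
            Real.Gamma ((1 + 1) / ((m+1:ℕ):ℝ)))
        = (a ^ ((1:ℝ) / (m+1:ℕ)) * a ^ ((1:ℝ) / (m+1:ℕ)) * a ^ (-((1:ℝ)+1) / ((m+1:ℕ):ℝ))) *
          (((m+1:ℕ) / Real.Gamma (2 / (m+1:ℕ))) *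
            ((1 / ((m+1:ℕ):ℝ)) * Real.Gamma ((1 + 1) / ((m+1:ℕ):ℝ)))) := by
          ring
      _ = 1 := by
          rw [hsum, one_mul, h11]
          field_simp
end
end

section
/- (Non-existence for linear growth and constant fragmentation.) Let τ₁ > 0, β₀ > 0, let τ(x) = τ₁x and β ≡ β₀, and let κ be a fragmentation kernel satisfying (K1) and (K2). Suppose (λ,U) solves the truncated eigenproblem on (0,∞) (R = ∞) with inflow δ = 0 in integrated form, with U ≥ 0, ∫₀^∞ U = 1, xU ∈ L¹(0,∞), 0 < ∫₀^∞ xU(x)dx < ∞, and τ₁xU(x) → 0 and τ₁x²U(x) → 0 as x → ∞. Then λ = β₀ and λ = τ₁. Consequently, if τ₁ ≠ β₀ then no such (λ,U) exists. -/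
open MeasureTheory Set Filter
open scoped ENNReal NNReal

noncomputable section

namespace NonexAux

def kk (κ : ℝ → Measure ℝ) : ℝ → Measure ℝ := fun y => if 0 < y then κ y else 0

lemma kk_of_pos (κ : ℝ → Measure ℝ) {y : ℝ} (hy : 0 < y) : kk κ y = κ y := if_pos hy

lemma kk_finite (κ : ℝ → Measure ℝ) (hK1 : K1 κ) (y : ℝ) : IsFiniteMeasure (kk κ y) := by
  by_cases hy : 0 < y
  · rw [kk_of_pos κ hy]; haveI := hK1 y hy; infer_instance
  · simp only [kk, if_neg hy]; infer_instance

lemma kk_mass_le (κ : ℝ → Measure ℝ) (hK1 : K1 κ) (y : ℝ) (s : Set ℝ) : kk κ y s ≤ 1 := by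
  by_cases hy : 0 < y
  · rw [kk_of_pos κ hy]; haveI := hK1 y hy; exact prob_le_one
  · simp [kk, if_neg hy]

/-- distance-like function to `Icc 0 x`. -/
def DD (x t : ℝ) : ℝ := max (max 0 (-t)) (t - x)

lemma DD_nonneg (x t : ℝ) : 0 ≤ DD x t :=
  le_trans (le_max_left 0 (-t)) (le_max_left _ _)

lemma DD_eq_zero {x t : ℝ} (h : t ∈ Set.Icc 0 x) : DD x t = 0 := by
  unfold DD
  rw [max_eq_left (le_trans (by linarith [h.2] : t - x ≤ 0) (le_max_left 0 (-t)))]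
  · exact max_eq_left (by linarith [h.1])

lemma DD_pos {x t : ℝ} (h : t ∉ Set.Icc 0 x) : 0 < DD x t := by
  rcases lt_or_ge t 0 with h1 | h1
  · exact lt_of_lt_of_le (by linarith : (0:ℝ) < -t)
      (le_trans (le_max_right 0 (-t)) (le_max_left _ _))
  · have h2 : x < t := by
      by_contra h2
      exact h ⟨h1, not_lt.mp h2⟩
    exact lt_of_lt_of_le (by linarith : (0:ℝ) < t - x) (le_max_right _ _)

def φa (k : ℕ) (x t : ℝ) : ℝ := max 0 (1 - ((k : ℝ) + 1) * DD x t)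

lemma φa_nonneg (k : ℕ) (x t : ℝ) : 0 ≤ φa k x t := le_max_left _ _

lemma φa_le_one (k : ℕ) (x t : ℝ) : φa k x t ≤ 1 := by
  apply max_le zero_le_one
  nlinarith [DD_nonneg x t, Nat.cast_nonneg (α := ℝ) k]

lemma φa_cont (k : ℕ) (x : ℝ) : Continuous (φa k x) := by
  unfold φa DD
  fun_prop

lemma φa_cont_x (k : ℕ) (t : ℝ) : Continuous (fun x => φa k x t) := by
  unfold φa DD
  fun_prop

lemma φa_lip (k : ℕ) (x x' t : ℝ) : |φa k x t - φa k x' t| ≤ ((k : ℝ) + 1) * |x - x'| := by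
  have h1 : |φa k x t - φa k x' t| ≤
      |(1 - ((k : ℝ) + 1) * DD x t) - (1 - ((k : ℝ) + 1) * DD x' t)| := by
    unfold φa
    rw [max_comm 0 _, max_comm 0 _]
    exact abs_max_sub_max_le_abs _ _ _
  have h2 : |DD x t - DD x' t| ≤ |x - x'| := by
    unfold DD
    calc |max (max 0 (-t)) (t - x) - max (max 0 (-t)) (t - x')|
        = |max (t - x) (max 0 (-t)) - max (t - x') (max 0 (-t))| := by
          rw [max_comm, max_comm (t - x') _]
      _ ≤ |(t - x) - (t - x')| := abs_max_sub_max_le_abs _ _ _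
      _ = |x' - x| := by ring_nf
      _ = |x - x'| := abs_sub_comm _ _
  calc |φa k x t - φa k x' t| ≤ |(1 - ((k : ℝ) + 1) * DD x t) - (1 - ((k : ℝ) + 1) * DD x' t)| := h1
    _ = ((k : ℝ) + 1) * |DD x t - DD x' t| := by
        have he : (1 - ((k:ℝ)+1) * DD x t) - (1 - ((k:ℝ)+1) * DD x' t)
            = ((k:ℝ)+1) * (DD x' t - DD x t) := by ring
        rw [he, abs_mul, abs_of_nonneg (by positivity : (0:ℝ) ≤ (k : ℝ) + 1),
          abs_sub_comm]
    _ ≤ ((k : ℝ) + 1) * |x - x'| := by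
        have := abs_nonneg (DD x t - DD x' t)
        nlinarith [Nat.cast_nonneg (α := ℝ) k]

lemma φa_integrable (κ : ℝ → Measure ℝ) (hK1 : K1 κ) (k : ℕ) (x y : ℝ) :
    Integrable (φa k x) (kk κ y) := by
  haveI := kk_finite κ hK1 y
  apply Integrable.mono' (integrable_const (1:ℝ)) ((φa_cont k x).aestronglyMeasurable)
  refine ae_of_all _ fun t => ?_
  rw [Real.norm_eq_abs, abs_of_nonneg (φa_nonneg _ _ _)]
  exact φa_le_one _ _ _

lemma Phi_meas (κ : ℝ → Measure ℝ) (hκmeas : KernelMeasurable κ) (k : ℕ) (x : ℝ) :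
    Measurable fun y => ∫ t, φa k x t ∂(kk κ y) := by
  have h : (fun y => ∫ t, φa k x t ∂(kk κ y))
      = fun y => if 0 < y then ∫ t, φa k x t ∂(κ y) else 0 := by
    funext y; by_cases hy : 0 < y <;> simp [kk, hy]
  rw [h]
  exact Measurable.ite measurableSet_Ioi (hκmeas _ (φa_cont k x)) measurable_const

lemma kk_mass_toReal_le (κ : ℝ → Measure ℝ) (hK1 : K1 κ) (y : ℝ) :
    ((kk κ y) Set.univ).toReal ≤ 1 := by
  have h := kk_mass_le κ hK1 y Set.univ
  calc ((kk κ y) Set.univ).toReal ≤ (1 : ℝ≥0∞).toReal :=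
        ENNReal.toReal_mono (by simp) h
    _ = 1 := by simp

lemma Phi_cont (κ : ℝ → Measure ℝ) (hK1 : K1 κ) (k : ℕ) (y : ℝ) :
    Continuous fun x => ∫ t, φa k x t ∂(kk κ y) := by
  haveI := kk_finite κ hK1 y
  have key : ∀ x x' : ℝ, |(∫ t, φa k x t ∂(kk κ y)) - ∫ t, φa k x' t ∂(kk κ y)|
      ≤ ((k : ℝ) + 1) * |x - x'| := by
    intro x x'
    rw [← integral_sub (φa_integrable κ hK1 k x y) (φa_integrable κ hK1 k x' y)]
    calc |∫ t, (φa k x t - φa k x' t) ∂(kk κ y)|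
        ≤ ∫ t, |φa k x t - φa k x' t| ∂(kk κ y) := by
          simpa [Real.norm_eq_abs] using
            norm_integral_le_integral_norm (μ := kk κ y) (fun t => φa k x t - φa k x' t)
      _ ≤ ∫ _t, ((k : ℝ) + 1) * |x - x'| ∂(kk κ y) := by
          apply integral_mono _ (integrable_const _) (fun t => φa_lip k x x' t)
          exact ((φa_integrable κ hK1 k x y).sub (φa_integrable κ hK1 k x' y)).abs
      _ = ((kk κ y) Set.univ).toReal * (((k : ℝ) + 1) * |x - x'|) := by
          rw [integral_const]; simp [smul_eq_mul, measureReal_def]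
      _ ≤ ((k : ℝ) + 1) * |x - x'| := by
          have h1 := kk_mass_toReal_le κ hK1 y
          have h2 : (0:ℝ) ≤ ((k : ℝ) + 1) * |x - x'| := by positivity
          nlinarith [ENNReal.toReal_nonneg (a := (kk κ y) Set.univ)]
  apply (LipschitzWith.of_dist_le_mul (K := ⟨(k : ℝ) + 1, by positivity⟩) ?_).continuous
  intro x x'
  rw [Real.dist_eq, Real.dist_eq]
  exact key x x'

lemma g_joint_meas (κ : ℝ → Measure ℝ) (hκmeas : KernelMeasurable κ) (hK1 : K1 κ) :
    Measurable fun p : ℝ × ℝ => ((kk κ p.2) (Set.Icc 0 p.1)).toReal := by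
  have hΦ : ∀ k : ℕ, Measurable (Function.uncurry fun x y => ∫ t, φa k x t ∂(kk κ y)) :=
    fun k => measurable_uncurry_of_continuous_of_measurable
      (fun y => Phi_cont κ hK1 k y) (fun x => Phi_meas κ hκmeas k x)
  apply measurable_of_tendsto_metrizable (fun k => hΦ k)
  rw [tendsto_pi_nhds]
  intro p
  haveI := kk_finite κ hK1 p.2
  have htarget : ((kk κ p.2) (Set.Icc 0 p.1)).toReal
      = ∫ t, Set.indicator (Set.Icc 0 p.1) (fun _ => (1:ℝ)) t ∂(kk κ p.2) := by
    rw [integral_indicator_const (1:ℝ) measurableSet_Icc]; simp [measureReal_def]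
  rw [htarget]
  apply tendsto_integral_of_dominated_convergence (fun _ => (1:ℝ))
    (fun k => (φa_cont k p.1).aestronglyMeasurable) (integrable_const 1)
    (fun k => ae_of_all _ fun t => by
      rw [Real.norm_eq_abs, abs_of_nonneg (φa_nonneg _ _ _)]; exact φa_le_one _ _ _)
  refine ae_of_all _ fun t => ?_
  by_cases ht : t ∈ Set.Icc 0 p.1
  · have hone : ∀ k : ℕ, φa k p.1 t = 1 := by
      intro k; unfold φa; rw [DD_eq_zero ht]; norm_num
    rw [Set.indicator_of_mem ht]
    simp only [hone]
    exact tendsto_const_nhds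
  · have hD := DD_pos ht
    rw [Set.indicator_of_notMem ht]
    apply Tendsto.congr' _ (tendsto_const_nhds (x := (0:ℝ)))
    filter_upwards [eventually_ge_atTop ⌈1 / DD p.1 t⌉₊] with k hk
    have h1 : 1 / DD p.1 t ≤ (k : ℝ) := le_trans (Nat.le_ceil _) (by exact_mod_cast hk)
    have h2 : (1:ℝ) ≤ ((k : ℝ) + 1) * DD p.1 t := by
      have := (div_le_iff₀ hD).mp h1
      nlinarith
    unfold φa
    rw [max_eq_left (by linarith)]

lemma g_sect_meas (κ : ℝ → Measure ℝ) (hκmeas : KernelMeasurable κ) (hK1 : K1 κ) (y : ℝ) :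
    Measurable fun x => ((kk κ y) (Set.Icc 0 x)).toReal :=
  (g_joint_meas κ hκmeas hK1).comp (measurable_id.prodMk measurable_const)

lemma key_half (κ : ℝ → Measure ℝ) (hκsupp : KernelSupport κ) (hκmeas : KernelMeasurable κ)
    (hK1 : K1 κ) (hK2 : K2 κ) {y : ℝ} (hy : 0 < y) :
    ∫ x in Set.Ioo 0 y, ((kk κ y) (Set.Icc 0 x)).toReal = y / 2 := by
  haveI := hK1 y hy
  set ν := κ y with hν
  have h0 : ν (Set.Iio 0) = 0 := by
    apply measure_mono_null _ (hκsupp y hy)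
    intro a ha
    simp only [Set.mem_compl_iff, Set.mem_Icc, not_and_or, not_le]
    exact Or.inl (by exact ha)
  have hid_int : Integrable (fun x => x) ν := by
    by_contra h
    have h2 := integral_undef h
    rw [hK2 y hy] at h2
    linarith
  have hnn : 0 ≤ᵐ[ν] fun x : ℝ => x := by
    rw [Filter.EventuallyLE, ae_iff]
    apply measure_mono_null _ h0
    intro a ha
    simp only [Set.mem_setOf_eq, not_le, Pi.zero_apply] at ha
    exact ha
  have layer : y / 2 = ∫ t in Set.Ioi (0:ℝ), (ν {a : ℝ | t < a}).toReal := by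
    rw [← hK2 y hy]
    exact hid_int.integral_eq_integral_meas_lt hnn
  have hIoi : ∀ t : ℝ, {a : ℝ | t < a} = Set.Ioi t := fun t => rfl
  -- the tail vanishes beyond y
  have htail : ∀ t : ℝ, y ≤ t → ν (Set.Ioi t) = 0 := by
    intro t ht
    apply measure_mono_null _ (hκsupp y hy)
    intro a ha
    simp only [Set.mem_Ioi] at ha
    simp only [Set.mem_compl_iff, Set.mem_Icc, not_and_or, not_le]
    exact Or.inr (by linarith)
  -- restrict the integral to (0, y)
  have hstep1 : ∫ t in Set.Ioi (0:ℝ), (ν (Set.Ioi t)).toReal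
      = ∫ t in Set.Ioo 0 y, (ν (Set.Ioi t)).toReal := by
    rw [setIntegral_congr_fun measurableSet_Ioi
      (g := fun t => Set.indicator (Set.Iio y) (fun t => (ν (Set.Ioi t)).toReal) t)
      (fun t _ => ?_)]
    · rw [integral_indicator measurableSet_Iio, Measure.restrict_restrict measurableSet_Iio,
        Set.Iio_inter_Ioi]
    · by_cases h : t < y
      · simp [Set.indicator_apply, Set.mem_Iio, h]
      · simp [Set.indicator_apply, Set.mem_Iio, h, htail t (not_lt.mp h)]
  -- complement identity on (0, y)
  have hcompl : ∀ t ∈ Set.Ioo (0:ℝ) y, (ν (Set.Ioi t)).toReal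
      = 1 - ((kk κ y) (Set.Icc 0 t)).toReal := by
    intro t ht
    rw [kk_of_pos κ hy, ← hν]
    have hdisj : Disjoint (Set.Icc (0:ℝ) t) (Set.Ioi t) :=
      (Set.Iic_disjoint_Ioi le_rfl).mono_left Set.Icc_subset_Iic_self
    have hici : ν (Set.Ici (0:ℝ)) = 1 := by
      have h1 := measure_add_measure_compl (μ := ν) (measurableSet_Ici (a := (0:ℝ)))
      rw [Set.compl_Ici, h0, add_zero, measure_univ] at h1
      exact h1
    have hu : ν (Set.Icc 0 t) + ν (Set.Ioi t) = 1 := by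
      rw [← measure_union hdisj measurableSet_Ioi, Set.Icc_union_Ioi_eq_Ici ht.1.le, hici]
    have hfin1 : ν (Set.Icc 0 t) ≠ ⊤ := measure_ne_top ν _
    have hfin2 : ν (Set.Ioi t) ≠ ⊤ := measure_ne_top ν _
    have := congrArg ENNReal.toReal hu
    rw [ENNReal.toReal_add hfin1 hfin2] at this
    simp only [ENNReal.toReal_one] at this
    linarith
  simp only [hIoi] at layer
  rw [hstep1, setIntegral_congr_fun measurableSet_Ioo hcompl] at layer
  have hint_g : IntegrableOn (fun t => ((kk κ y) (Set.Icc 0 t)).toReal) (Set.Ioo 0 y) := by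
    apply Integrable.mono' (integrable_const (1:ℝ))
      ((g_sect_meas κ hκmeas hK1 y).aestronglyMeasurable.restrict)
    refine ae_of_all _ fun t => ?_
    rw [Real.norm_eq_abs, abs_of_nonneg ENNReal.toReal_nonneg]
    calc ((kk κ y) (Set.Icc 0 t)).toReal ≤ (1:ℝ≥0∞).toReal :=
          ENNReal.toReal_mono (by simp) (kk_mass_le κ hK1 y _)
      _ = 1 := by simp
  rw [integral_sub (μ := volume.restrict (Set.Ioo 0 y)) (f := fun _ : ℝ => (1:ℝ))
      (integrableOn_const (by simp [Real.volume_Ioo])) hint_g,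
    integral_const] at layer
  simp only [measureReal_def, MeasurableSet.univ, Measure.restrict_apply, Set.univ_inter, Real.volume_Ioo,
    smul_eq_mul, mul_one] at layer
  rw [ENNReal.toReal_ofReal (by linarith)] at layer
  linarith


lemma kk_toReal_le_one (κ : ℝ → Measure ℝ) (hK1 : K1 κ) (y : ℝ) (s : Set ℝ) :
    ((kk κ y) s).toReal ≤ 1 := by
  simpa using ENNReal.toReal_mono (by simp) (kk_mass_le κ hK1 y s)

lemma g_sect_meas_y (κ : ℝ → Measure ℝ) (hκmeas : KernelMeasurable κ) (hK1 : K1 κ) (x : ℝ) :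
    Measurable fun y => ((kk κ y) (Set.Icc 0 x)).toReal :=
  (g_joint_meas κ hκmeas hK1).comp measurable_prodMk_left

lemma g_one (κ : ℝ → Measure ℝ) (hκsupp : KernelSupport κ) (hK1 : K1 κ) {x y : ℝ}
    (hy : 0 < y) (hyx : y ≤ x) : ((kk κ y) (Set.Icc 0 x)).toReal = 1 := by
  haveI := hK1 y hy
  rw [kk_of_pos κ hy]
  have hc : κ y (Set.Icc 0 x)ᶜ = 0 :=
    measure_mono_null (Set.compl_subset_compl.mpr (Set.Icc_subset_Icc_right hyx)) (hκsupp y hy)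
  have h1 := measure_add_measure_compl (μ := κ y) (measurableSet_Icc (a := (0:ℝ)) (b := x))
  rw [hc, add_zero, measure_univ] at h1
  rw [h1]; simp

lemma g_int_Ioo (κ : ℝ → Measure ℝ) (hκmeas : KernelMeasurable κ) (hK1 : K1 κ) (y z : ℝ) :
    IntegrableOn (fun x => ((kk κ y) (Set.Icc 0 x)).toReal) (Set.Ioo 0 z) := by
  apply Integrable.mono' (integrable_const (1:ℝ))
    ((g_sect_meas κ hκmeas hK1 y).aestronglyMeasurable.restrict)
  refine ae_of_all _ fun t => ?_
  rw [Real.norm_eq_abs, abs_of_nonneg ENNReal.toReal_nonneg]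
  exact kk_toReal_le_one κ hK1 y _

end NonexAux

/-- **Non-existence for linear growth `τ(x)=τ₁x` and constant fragmentation
`β ≡ β₀`.** A normalised nonnegative decaying solution of the eigenproblem on
`(0,∞)` in integrated form would satisfy both `λ = β₀` and `λ = τ₁`; hence
`τ₁ = β₀`, and for `τ₁ ≠ β₀` no such solution exists. -/
theorem nonexistence_linear_growth_constant_fragmentation
    (τ₁ β₀ : ℝ) (hτ₁ : 0 < τ₁) (hβ₀ : 0 < β₀)
    (κ : ℝ → Measure ℝ)
    (hκfin : ∀ y : ℝ, 0 < y → IsFiniteMeasure (κ y))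
    (hκsupp : KernelSupport κ) (hκmeas : KernelMeasurable κ)
    (hK1 : K1 κ) (hK2 : K2 κ)
    (lam : ℝ) (U : ℝ → ℝ)
    (hTE : TruncEigen (fun x => τ₁ * x) (fun _ => β₀) κ 0 (Set.Ioi 0) lam U)
    (hU0 : ∀ᵐ x ∂(volume.restrict (Set.Ioi (0:ℝ))), 0 ≤ U x)
    (hUnorm : ∫ x in Set.Ioi (0:ℝ), U x = 1)
    (hxU : IntegrableOn (fun x => x * U x) (Set.Ioi 0))
    (hxUpos : 0 < ∫ x in Set.Ioi (0:ℝ), x * U x)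
    (hlim1 : Tendsto (fun x => τ₁ * x * U x) atTop (nhds 0))
    (hlim2 : Tendsto (fun x => τ₁ * x ^ 2 * U x) atTop (nhds 0)) :
    lam = β₀ ∧ lam = τ₁ ∧ τ₁ = β₀ := by
  classical
  obtain ⟨hUint, hBUint, heq⟩ := hTE
  set g : ℝ → ℝ → ℝ := fun x y => ((NonexAux.kk κ y) (Set.Icc 0 x)).toReal with hgdef
  have hg0 : ∀ x y : ℝ, 0 ≤ g x y := fun x y => ENNReal.toReal_nonneg
  have hg1 : ∀ x y : ℝ, g x y ≤ 1 := fun x y => NonexAux.kk_toReal_le_one κ hK1 y _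
  have hgone : ∀ {x y : ℝ}, 0 < y → y ≤ x → g x y = 1 :=
    fun hy hyx => NonexAux.g_one κ hκsupp hK1 hy hyx
  have hgmy : ∀ x : ℝ, Measurable fun y => g x y :=
    fun x => NonexAux.g_sect_meas_y κ hκmeas hK1 x
  have hUm : AEStronglyMeasurable U (volume.restrict (Set.Ioi 0)) := hUint.aestronglyMeasurable
  have hbnd : ∀ x y : ℝ, ‖U y * g x y‖ ≤ |U y| := by
    intro x y
    rw [Real.norm_eq_abs, abs_mul]
    calc |U y| * |g x y| ≤ |U y| * 1 :=
          mul_le_mul_of_nonneg_left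
            (by rw [abs_of_nonneg (hg0 x y)]; exact hg1 x y) (abs_nonneg _)
      _ = |U y| := mul_one _
  have hIint : ∀ x : ℝ, Integrable (fun y => U y * g x y) (volume.restrict (Set.Ioi 0)) := by
    intro x
    exact Integrable.mono' hUint.abs (hUm.mul (hgmy x).aestronglyMeasurable)
      (ae_of_all _ fun y => hbnd x y)
  -- rewritten equation
  have heq' : ∀ᵐ x ∂(volume.restrict (Set.Ioi (0:ℝ))),
      τ₁ * x * U x + (lam + β₀) * (∫ y in Set.Ioo 0 x, U y)
        = 2 * β₀ * ∫ y in Set.Ioi 0, U y * g x y := by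
    filter_upwards [heq] with x hx
    have hx' : τ₁ * x * U x + lam * (∫ y in Set.Ioo 0 x, U y)
        + (∫ y in Set.Ioo 0 x, β₀ * U y)
        = 0 + 2 * ∫ y in Set.Ioi 0, β₀ * U y * ((κ y) (Set.Icc 0 x)).toReal := hx
    have h1 : (∫ y in Set.Ioo 0 x, β₀ * U y) = β₀ * ∫ y in Set.Ioo 0 x, U y :=
      integral_const_mul _ _
    have h2 : (∫ y in Set.Ioi 0, β₀ * U y * ((κ y) (Set.Icc 0 x)).toReal)
        = β₀ * ∫ y in Set.Ioi 0, U y * g x y := by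
      rw [← integral_const_mul]
      apply setIntegral_congr_fun measurableSet_Ioi
      intro y hy
      simp only [hgdef, NonexAux.kk_of_pos κ hy]
      ring
    rw [h1, h2] at hx'
    linarith [hx']
  -- Step 1 : a sequence tending to infinity along which the equation holds
  have hseq : ∀ n : ℕ, ∃ x : ℝ, (n:ℝ) < x ∧
      τ₁ * x * U x + (lam + β₀) * (∫ y in Set.Ioo 0 x, U y)
        = 2 * β₀ * ∫ y in Set.Ioi 0, U y * g x y := by
    intro n
    by_contra hcon
    push_neg at hcon
    have h2 : Set.Ioi (n:ℝ) ⊆ {x : ℝ | ¬ (τ₁ * x * U x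
        + (lam + β₀) * (∫ y in Set.Ioo 0 x, U y)
        = 2 * β₀ * ∫ y in Set.Ioi 0, U y * g x y)} := by
      intro x hx
      exact hcon x hx
    have h3 := measure_mono_null h2 (ae_iff.mp heq')
    rw [Measure.restrict_apply' measurableSet_Ioi,
      Set.inter_eq_left.mpr (Set.Ioi_subset_Ioi (by positivity)), Real.volume_Ioi] at h3
    exact ENNReal.top_ne_zero h3
  choose xs hxs1 hxs2 using hseq
  have htend : Tendsto xs atTop atTop :=
    tendsto_atTop_mono (fun n => (hxs1 n).le) tendsto_natCast_atTop_atTop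
  have L1 : Tendsto (fun n => τ₁ * xs n * U (xs n)) atTop (nhds 0) := hlim1.comp htend
  have L2 : Tendsto (fun n => ∫ y in Set.Ioo 0 (xs n), U y) atTop (nhds 1) := by
    have h := intervalIntegral_tendsto_integral_Ioi 0 hUint htend
    rw [hUnorm] at h
    apply h.congr
    intro n
    rw [intervalIntegral.integral_of_le
        (le_trans (Nat.cast_nonneg n) (hxs1 n).le), integral_Ioc_eq_integral_Ioo]
  have L3 : Tendsto (fun n => ∫ y in Set.Ioi 0, U y * g (xs n) y) atTop (nhds 1) := by
    rw [← hUnorm]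
    apply tendsto_integral_of_dominated_convergence (fun y => |U y|)
      (fun n => (hIint (xs n)).aestronglyMeasurable) hUint.abs
      (fun n => ae_of_all _ fun y => hbnd (xs n) y)
    filter_upwards [self_mem_ae_restrict measurableSet_Ioi] with y hy
    have hev : (fun n => U y * g (xs n) y) =ᶠ[atTop] fun _ => U y := by
      filter_upwards [htend.eventually (eventually_ge_atTop y)] with n hn
      rw [hgone hy hn, mul_one]
    exact Tendsto.congr' hev.symm tendsto_const_nhds
  have hLHS : Tendsto (fun n => τ₁ * xs n * U (xs n)
      + (lam + β₀) * ∫ y in Set.Ioo 0 (xs n), U y) atTop (nhds (0 + (lam + β₀) * 1)) :=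
    L1.add (tendsto_const_nhds.mul L2)
  have hRHS : Tendsto (fun n => 2 * β₀ * ∫ y in Set.Ioi 0, U y * g (xs n) y)
      atTop (nhds (2 * β₀ * 1)) := tendsto_const_nhds.mul L3
  have hkey := tendsto_nhds_unique (hLHS.congr (fun n => hxs2 n)) hRHS
  have hlamβ : lam = β₀ := by linarith
  -- Step 2 : first-moment identity
  set W : ℝ → ℝ := fun x => ∫ y in Set.Ioi 0,
      Set.indicator (Set.Ioi x) (fun y => U y * g x y) y with hWdef
  have hWint : ∀ x : ℝ, Integrable
      (fun y => Set.indicator (Set.Ioi x) (fun y => U y * g x y) y)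
      (volume.restrict (Set.Ioi 0)) := by
    intro x
    apply Integrable.mono' hUint.abs
      (((hIint x).aestronglyMeasurable).indicator measurableSet_Ioi)
    refine ae_of_all _ fun y => le_trans (norm_indicator_le_norm_self _ _) (hbnd x y)
  have hIicint : ∀ x : ℝ, Integrable
      (fun y => Set.indicator (Set.Iic x) (fun y => U y * g x y) y)
      (volume.restrict (Set.Ioi 0)) := by
    intro x
    apply Integrable.mono' hUint.abs
      (((hIint x).aestronglyMeasurable).indicator measurableSet_Iic)
    refine ae_of_all _ fun y => le_trans (norm_indicator_le_norm_self _ _) (hbnd x y)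
  have hsplit : ∀ x : ℝ, (∫ y in Set.Ioi 0, U y * g x y)
      = (∫ y in Set.Ioo 0 x, U y) + W x := by
    intro x
    have hdecomp : (fun y => U y * g x y) = fun y =>
        Set.indicator (Set.Iic x) (fun y => U y * g x y) y
        + Set.indicator (Set.Ioi x) (fun y => U y * g x y) y := by
      funext y
      by_cases h : y ≤ x
      · rw [Set.indicator_of_mem (Set.mem_Iic.mpr h),
          Set.indicator_of_notMem (by simpa [Set.mem_Ioi] using h)]
        ring
      · rw [Set.indicator_of_notMem (by simpa [Set.mem_Iic] using h),
          Set.indicator_of_mem (Set.mem_Ioi.mpr (not_le.mp h))]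
        ring
    rw [hdecomp, integral_add (hIicint x) (hWint x)]
    congr 1
    rw [integral_indicator measurableSet_Iic, Measure.restrict_restrict measurableSet_Iic,
      Set.Iic_inter_Ioi]
    rw [setIntegral_congr_fun measurableSet_Ioc
      (fun y hy => by rw [hgone hy.1 hy.2, mul_one])]
    exact integral_Ioc_eq_integral_Ioo
  have heq2 : ∀ᵐ x ∂(volume.restrict (Set.Ioi (0:ℝ))), τ₁ * x * U x = 2 * β₀ * W x := by
    filter_upwards [heq'] with x hx
    rw [hsplit x, hlamβ] at hx
    linear_combination hx
  -- integrability and nonnegativity facts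
  have hτint : Integrable (fun x => τ₁ * x * U x) (volume.restrict (Set.Ioi 0)) := by
    have h := hxU.const_mul τ₁
    exact h.congr (ae_of_all _ fun x => by ring)
  have hτnn : 0 ≤ᵐ[volume.restrict (Set.Ioi (0:ℝ))] fun x => τ₁ * x * U x := by
    filter_upwards [hU0, self_mem_ae_restrict measurableSet_Ioi] with x h1 h2
    have hx0 : (0:ℝ) < x := h2
    exact mul_nonneg (mul_nonneg hτ₁.le hx0.le) h1
  have hWnn : ∀ x : ℝ, 0 ≤ᵐ[volume.restrict (Set.Ioi (0:ℝ))]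
      fun y => Set.indicator (Set.Ioi x) (fun y => U y * g x y) y := by
    intro x
    filter_upwards [hU0] with y hy
    exact Set.indicator_apply_nonneg (fun _ => mul_nonneg hy (hg0 x y))
  -- the ENNReal computation
  have E1 : ENNReal.ofReal (τ₁ * ∫ x in Set.Ioi (0:ℝ), x * U x)
      = ∫⁻ x in Set.Ioi (0:ℝ), ENNReal.ofReal (τ₁ * x * U x) := by
    rw [← integral_const_mul,
      show (fun x => τ₁ * (x * U x)) = fun x => τ₁ * x * U x from funext fun x => by ring]
    exact ofReal_integral_eq_lintegral_ofReal hτint hτnn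
  have E2 : (∫⁻ x in Set.Ioi (0:ℝ), ENNReal.ofReal (τ₁ * x * U x))
      = ∫⁻ x in Set.Ioi (0:ℝ), ENNReal.ofReal (2 * β₀) * ENNReal.ofReal (W x) := by
    apply lintegral_congr_ae
    filter_upwards [heq2] with x hx
    rw [hx, ENNReal.ofReal_mul (by positivity)]
  have E3 : (∫⁻ x in Set.Ioi (0:ℝ), ENNReal.ofReal (2 * β₀) * ENNReal.ofReal (W x))
      = ENNReal.ofReal (2 * β₀) * ∫⁻ x in Set.Ioi (0:ℝ), ENNReal.ofReal (W x) :=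
    lintegral_const_mul' _ _ ENNReal.ofReal_ne_top
  have E4 : (∫⁻ x in Set.Ioi (0:ℝ), ENNReal.ofReal (W x))
      = ∫⁻ x in Set.Ioi (0:ℝ), ∫⁻ y in Set.Ioi (0:ℝ),
          ENNReal.ofReal (Set.indicator (Set.Ioi x) (fun y => U y * g x y) y) := by
    apply lintegral_congr fun x => ?_
    exact ofReal_integral_eq_lintegral_ofReal (hWint x) (hWnn x)
  have hswap : (∫⁻ x in Set.Ioi (0:ℝ), ∫⁻ y in Set.Ioi (0:ℝ),
        ENNReal.ofReal (Set.indicator (Set.Ioi x) (fun y => U y * g x y) y))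
      = ∫⁻ y in Set.Ioi (0:ℝ), ∫⁻ x in Set.Ioi (0:ℝ),
        ENNReal.ofReal (Set.indicator (Set.Ioi x) (fun y' => U y' * g x y') y) := by
    apply lintegral_lintegral_swap
    have hGa : AEMeasurable (fun p : ℝ × ℝ => U p.2 * g p.1 p.2)
        ((volume.restrict (Set.Ioi 0)).prod (volume.restrict (Set.Ioi 0))) :=
      hUm.comp_snd.aemeasurable.mul ((NonexAux.g_joint_meas κ hκmeas hK1).aemeasurable)
    have hs : MeasurableSet {p : ℝ × ℝ | p.1 < p.2} :=
      measurableSet_lt measurable_fst measurable_snd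
    have hind : AEMeasurable
        (Set.indicator {p : ℝ × ℝ | p.1 < p.2} (fun p => U p.2 * g p.1 p.2))
        ((volume.restrict (Set.Ioi 0)).prod (volume.restrict (Set.Ioi 0))) :=
      hGa.indicator hs
    have hres : (Function.uncurry fun x y =>
        ENNReal.ofReal (Set.indicator (Set.Ioi x) (fun y' => U y' * g x y') y))
        = fun p : ℝ × ℝ => ENNReal.ofReal
            (Set.indicator {q : ℝ × ℝ | q.1 < q.2} (fun q => U q.2 * g q.1 q.2) p) := by
      funext p
      rcases p with ⟨x, y⟩
      by_cases h : x < y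
      · simp [Function.uncurry, Set.indicator_apply, h]
      · simp [Function.uncurry, Set.indicator_apply, h]
    rw [hres]
    exact ENNReal.measurable_ofReal.comp_aemeasurable hind
  have E6 : (∫⁻ y in Set.Ioi (0:ℝ), ∫⁻ x in Set.Ioi (0:ℝ),
        ENNReal.ofReal (Set.indicator (Set.Ioi x) (fun y' => U y' * g x y') y))
      = ∫⁻ y in Set.Ioi (0:ℝ), ENNReal.ofReal (y / 2 * U y) := by
    apply lintegral_congr_ae
    filter_upwards [hU0, self_mem_ae_restrict measurableSet_Ioi] with y hUy hy
    have hy0 : (0:ℝ) < y := hy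
    have hptw : ∀ x : ℝ, Set.indicator (Set.Ioi x) (fun y' => U y' * g x y') y
        = U y * Set.indicator (Set.Iio y) (fun x' => g x' y) x := by
      intro x
      by_cases h : x < y
      · rw [Set.indicator_of_mem (Set.mem_Ioi.mpr h),
          Set.indicator_of_mem (Set.mem_Iio.mpr h)]
      · rw [Set.indicator_of_notMem (by simpa [Set.mem_Ioi] using h),
          Set.indicator_of_notMem (by simpa [Set.mem_Iio] using h), mul_zero]
    have hind2 : Integrable (Set.indicator (Set.Iio y) (fun x' => g x' y))
        (volume.restrict (Set.Ioi 0)) := by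
      rw [integrable_indicator_iff measurableSet_Iio]
      show Integrable _ ((volume.restrict (Set.Ioi 0)).restrict (Set.Iio y))
      rw [Measure.restrict_restrict measurableSet_Iio, Set.Iio_inter_Ioi]
      exact NonexAux.g_int_Ioo κ hκmeas hK1 y y
    have hnn2 : 0 ≤ᵐ[volume.restrict (Set.Ioi (0:ℝ))]
        Set.indicator (Set.Iio y) (fun x' => g x' y) :=
      ae_of_all _ fun x => Set.indicator_apply_nonneg (fun _ => hg0 x y)
    calc (∫⁻ x in Set.Ioi (0:ℝ),
          ENNReal.ofReal (Set.indicator (Set.Ioi x) (fun y' => U y' * g x y') y))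
        = ∫⁻ x in Set.Ioi (0:ℝ), ENNReal.ofReal (U y)
            * ENNReal.ofReal (Set.indicator (Set.Iio y) (fun x' => g x' y) x) := by
          apply lintegral_congr fun x => ?_
          rw [hptw x, ENNReal.ofReal_mul hUy]
      _ = ENNReal.ofReal (U y) * ∫⁻ x in Set.Ioi (0:ℝ),
            ENNReal.ofReal (Set.indicator (Set.Iio y) (fun x' => g x' y) x) :=
          lintegral_const_mul' _ _ ENNReal.ofReal_ne_top
      _ = ENNReal.ofReal (U y) * ENNReal.ofReal (y / 2) := by
          congr 1
          rw [← ofReal_integral_eq_lintegral_ofReal hind2 hnn2]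
          congr 1
          rw [integral_indicator measurableSet_Iio,
            Measure.restrict_restrict measurableSet_Iio, Set.Iio_inter_Ioi]
          exact NonexAux.key_half κ hκsupp hκmeas hK1 hK2 hy0
      _ = ENNReal.ofReal (y / 2 * U y) := by
          rw [mul_comm, ← ENNReal.ofReal_mul (by positivity : (0:ℝ) ≤ y / 2)]
  have hhalfint : Integrable (fun y => y / 2 * U y) (volume.restrict (Set.Ioi 0)) := by
    have h := hxU.const_mul (2⁻¹ : ℝ)
    exact h.congr (ae_of_all _ fun y => by ring)
  have hhalfnn : 0 ≤ᵐ[volume.restrict (Set.Ioi (0:ℝ))] fun y => y / 2 * U y := by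
    filter_upwards [hU0, self_mem_ae_restrict measurableSet_Ioi] with y h1 h2
    have hy0 : (0:ℝ) < y := h2
    exact mul_nonneg (by linarith) h1
  have E7 : (∫⁻ y in Set.Ioi (0:ℝ), ENNReal.ofReal (y / 2 * U y))
      = ENNReal.ofReal ((∫ x in Set.Ioi (0:ℝ), x * U x) / 2) := by
    rw [← ofReal_integral_eq_lintegral_ofReal hhalfint hhalfnn]
    congr 1
    rw [show (fun y => y / 2 * U y) = fun y => (2⁻¹:ℝ) * (y * U y) from
      funext fun y => by ring, integral_const_mul]
    ring
  have hbig : ENNReal.ofReal (τ₁ * ∫ x in Set.Ioi (0:ℝ), x * U x)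
      = ENNReal.ofReal (β₀ * ∫ x in Set.Ioi (0:ℝ), x * U x) := by
    rw [E1, E2, E3, E4, hswap, E6, E7, ← ENNReal.ofReal_mul (by positivity)]
    congr 1
    ring
  have hfinal : τ₁ = β₀ := by
    have h := (ENNReal.ofReal_eq_ofReal_iff
      (mul_nonneg hτ₁.le hxUpos.le) (mul_nonneg hβ₀.le hxUpos.le)).mp hbig
    exact mul_left_cancel₀ (ne_of_gt hxUpos) (by linarith)
  exact ⟨hlamβ, hlamβ.trans hfinal.symm, hfinal⟩
end
end
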